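/- arXiv:1912.08335 — 3 statements merged into one kernel-verified Lean document; each statement's English description precedes it below -/
import Mathlib

section
/- First-order PAC-Bayes bound for the log-loss: Fix a prior probability measure π on Θ, ξ ∈ (0,1), and n ≥ 1. Then, with ν^n-probability at least 1 − ξ over the draw of an i.i.d. sample D = (x_1, …, x_n) from ν, simultaneously for all probability measures ρ on Θ: H(ν) ≤ L̄(ρ) ≤ L̄_J(ρ) ≤ (B/(1 − e^{−B})) · ( ∫ L̂(D, θ) dρ(θ) + (KL(ρ, π) + ln(1/ξ))/n ). -/
open MeasureTheory Real
open scoped ENNReal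

noncomputable section

lemma integral_log_le_log_of_integral_le {Θ : Type*} [MeasurableSpace Θ]
    (ρ : Measure Θ) [IsProbabilityMeasure ρ] {h : Θ → ℝ} {m : ℝ} (hm : 0 < m)
    (hpos : ∀ᵐ θ ∂ρ, 0 < h θ) (hint : Integrable h ρ)
    (hlogint : Integrable (fun θ => Real.log (h θ)) ρ)
    (hle : ∫ θ, h θ ∂ρ ≤ m) : ∫ θ, Real.log (h θ) ∂ρ ≤ Real.log m := by
  have key : ∀ᵐ θ ∂ρ, Real.log (h θ) ≤ h θ / m - 1 + Real.log m := by
    filter_upwards [hpos] with θ hθ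
    have h1 : Real.log (h θ / m) ≤ h θ / m - 1 :=
      Real.log_le_sub_one_of_pos (by positivity)
    rw [Real.log_div hθ.ne' hm.ne'] at h1
    linarith
  have i1 : Integrable (fun θ => h θ / m - 1) ρ :=
    (hint.div_const m).sub (integrable_const 1)
  have i0 : Integrable (fun θ => h θ / m) ρ := hint.div_const m
  have hint2 : Integrable (fun θ => h θ / m - 1 + Real.log m) ρ :=
    i1.add (integrable_const _)
  calc ∫ θ, Real.log (h θ) ∂ρ ≤ ∫ θ, (h θ / m - 1 + Real.log m) ∂ρ :=
        integral_mono_ae hlogint hint2 key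
    _ = (∫ θ, h θ ∂ρ) / m - 1 + Real.log m := by
        rw [integral_add i1 (integrable_const _),
          integral_sub i0 (integrable_const 1), integral_div,
          integral_const, integral_const]
        simp
    _ ≤ m / m - 1 + Real.log m := by gcongr
    _ = Real.log m := by rw [div_self hm.ne']; ring

lemma exp_neg_le_chord {B : ℝ} (hB : 0 < B) {t : ℝ} (ht0 : 0 ≤ t) (htB : t ≤ B) :
    Real.exp (-t) ≤ 1 - (1 - Real.exp (-B)) / B * t := by
  have hs0 : 0 ≤ t / B := by positivity
  have hs1 : t / B ≤ 1 := (div_le_one hB).2 htB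
  have key := convexOn_exp.2 (Set.mem_univ 0) (Set.mem_univ (-B))
    (show (0:ℝ) ≤ 1 - t / B by linarith) hs0 (by ring)
  simp only [smul_eq_mul, mul_zero, zero_add, Real.exp_zero, mul_one] at key
  have h1 : (t / B) * (-B) = -t := by field_simp
  rw [h1] at key
  calc Real.exp (-t) ≤ (1 - t / B) + t / B * Real.exp (-B) := key
    _ = 1 - (1 - Real.exp (-B)) / B * t := by field_simp; ring

lemma lintegral_pi_prod_pow {X : Type*} [MeasurableSpace X] (ν : Measure X)
    [IsProbabilityMeasure ν] (g : X → ℝ≥0∞) (hg : Measurable g) :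
    ∀ n : ℕ, ∫⁻ D : Fin n → X, ∏ i, g (D i) ∂(Measure.pi fun _ : Fin n => ν)
      = (∫⁻ x, g x ∂ν) ^ n := by
  intro n
  induction n with
  | zero => simp
  | succ n ih =>
    have A := (measurePreserving_piFinSuccAbove (fun _ : Fin (n + 1) => ν) 0).symm
    rw [← A.lintegral_comp_emb (MeasurableEquiv.measurableEmbedding _)]
    simp_rw [MeasurableEquiv.piFinSuccAbove_symm_apply, Fin.insertNthEquiv,
      Fin.prod_univ_succ, Fin.insertNth_zero]
    simp only [Fin.zero_succAbove, Function.comp_def, Fin.cons_zero, Fin.cons_succ,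
      Equiv.coe_fn_mk, cast_eq]
    have hm2 : Measurable (fun y : Fin n → X => ∏ i, g (y i)) :=
      Finset.measurable_prod _ (fun i _ => hg.comp (measurable_pi_apply i))
    rw [lintegral_prod_mul hg.aemeasurable hm2.aemeasurable]
    rw [ih, pow_succ]
    ring

-- aux end

/-- The predictive density `p_ρ(x) = ∫ p(x|θ) dρ(θ)`. -/
def predictive {X Θ : Type*} [MeasurableSpace Θ] (p : X → Θ → ℝ)
    (ρ : Measure Θ) (x : X) : ℝ := ∫ θ, p x θ ∂ρ

/-- Expected code length of the Bayesian mixture code, `L̄(ρ) = ∫ -ln p_ρ(x) dν(x)`. -/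
def codeLength {X Θ : Type*} [MeasurableSpace X] [MeasurableSpace Θ]
    (p : X → Θ → ℝ) (ν : Measure X) (ρ : Measure Θ) : ℝ :=
  ∫ x, -Real.log (predictive p ρ x) ∂ν

/-- The risk (expected log-loss) of a parameter: `L(θ) = ∫ -ln p(x|θ) dν(x)`. -/
def risk {X Θ : Type*} [MeasurableSpace X] (p : X → Θ → ℝ) (ν : Measure X)
    (θ : Θ) : ℝ := ∫ x, -Real.log (p x θ) ∂ν

/-- The first-order Jensen bound `L̄_J(ρ) = ∫ L(θ) dρ(θ)`. -/
def jensenBound {X Θ : Type*} [MeasurableSpace X] [MeasurableSpace Θ]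
    (p : X → Θ → ℝ) (ν : Measure X) (ρ : Measure Θ) : ℝ :=
  ∫ θ, risk p ν θ ∂ρ

/-- Entropy of a measure with density `f` w.r.t. `μ`: `H(ν) = -∫ f ln f dμ`. -/
def entropy {X : Type*} [MeasurableSpace X] (μ : Measure X) (f : X → ℝ) : ℝ :=
  -∫ x, f x * Real.log (f x) ∂μ

open Classical in
/-- Kullback–Leibler divergence between probability measures on the parameter
space, with value `+∞` when `ρ` is not absolutely continuous w.r.t. the prior (or
the log-likelihood ratio is not integrable). -/
def klDiv' {Θ : Type*} [MeasurableSpace Θ] (ρ pr : Measure Θ) : ℝ≥0∞ :=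
  if ρ ≪ pr ∧ MeasureTheory.Integrable (fun θ => Real.log ((ρ.rnDeriv pr θ).toReal)) ρ
  then ENNReal.ofReal (∫ θ, Real.log ((ρ.rnDeriv pr θ).toReal) ∂ρ)
  else ⊤

/-- Empirical risk of `θ` on the sample `D = (x_1, …, x_n)`:
`L̂(D,θ) = (1/n) Σ_i −ln p(x_i|θ)`. -/
def empRisk {X Θ : Type*} (p : X → Θ → ℝ) (n : ℕ) (D : Fin n → X) (θ : Θ) : ℝ :=
  (1 / (n : ℝ)) * ∑ i : Fin n, -Real.log (p (D i) θ)

/-- First-order PAC-Bayes bound for the log-loss: with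
`ν^n`-probability at least `1 − ξ` over an i.i.d. sample `D`, simultaneously for
all probability measures `ρ` on `Θ`,
`H(ν) ≤ L̄(ρ) ≤ L̄_J(ρ) ≤ (B/(1−e^{−B}))(∫ L̂(D,θ) dρ(θ) + (KL(ρ,π) + ln(1/ξ))/n)`
(the last inequality being trivially true when `KL(ρ,π) = ∞`). -/
theorem first_order_pac_bayes_bound
    {X : Type*} [MeasurableSpace X] (μ : Measure X) [SigmaFinite μ]
    (ν : Measure X) [IsProbabilityMeasure ν]
    (f : X → ℝ) (hf_meas : Measurable f) (hf_nonneg : 0 ≤ f)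
    (hf : ν = μ.withDensity (fun x => ENNReal.ofReal (f x)))
    {Θ : Type*} [MeasurableSpace Θ]
    (p : X → Θ → ℝ) (hp_meas : Measurable (Function.uncurry p))
    (hp_dens : ∀ θ, IsProbabilityMeasure
      (μ.withDensity (fun x => ENNReal.ofReal (p x θ))))
    (B : ℝ) (hB : 0 < B)
    (hbound : ∀ θ, ∀ᵐ x ∂ν, Real.exp (-B) ≤ p x θ ∧ p x θ ≤ 1)
    (pri : Measure Θ) [IsProbabilityMeasure pri]
    (ξ : ℝ) (hξ : 0 < ξ) (hξ1 : ξ < 1) (n : ℕ) (hn : 1 ≤ n) :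
    ENNReal.ofReal (1 - ξ) ≤
      (Measure.pi fun _ : Fin n => ν)
        {D : Fin n → X | ∀ ρ : Measure Θ, IsProbabilityMeasure ρ →
          entropy μ f ≤ codeLength p ν ρ ∧
          codeLength p ν ρ ≤ jensenBound p ν ρ ∧
          (klDiv' ρ pri ≠ ⊤ →
            jensenBound p ν ρ ≤ (B / (1 - Real.exp (-B))) *
              ((∫ θ, empRisk p n D θ ∂ρ) +
               ((klDiv' ρ pri).toReal + Real.log (1 / ξ)) / n))} := by
  -- ### Basic facts
  have hexpB : Real.exp (-B) < 1 := by
    rw [Real.exp_lt_one_iff]; linarith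
  set c : ℝ := (1 - Real.exp (-B)) / B with hc_def
  have hc : 0 < c := div_pos (by linarith) hB
  have hKc : B / (1 - Real.exp (-B)) = 1 / c := by rw [hc_def, one_div_div]
  have hn' : (0:ℝ) < (n:ℝ) := by exact_mod_cast Nat.lt_of_lt_of_le Nat.zero_lt_one hn
  have hp_x : ∀ θ, Measurable (fun x => p x θ) := fun θ =>
    hp_meas.comp (measurable_id.prodMk measurable_const)
  have hp_θ : ∀ x, Measurable (fun θ => p x θ) := fun x =>
    hp_meas.comp (measurable_const.prodMk measurable_id)
  have hb' : ∀ θ, ∀ᵐ x ∂ν, (0 ≤ -Real.log (p x θ) ∧ -Real.log (p x θ) ≤ B) ∧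
      0 < p x θ ∧ p x θ ≤ 1 := by
    intro θ
    filter_upwards [hbound θ] with x hx
    have hp0 : 0 < p x θ := lt_of_lt_of_le (Real.exp_pos _) hx.1
    have h1 : Real.log (p x θ) ≤ 0 := Real.log_nonpos hp0.le hx.2
    have h2 : -B ≤ Real.log (p x θ) := (Real.le_log_iff_exp_le hp0).2 hx.1
    exact ⟨⟨by linarith, by linarith⟩, hp0, hx.2⟩
  have hll_meas : ∀ θ, Measurable (fun x => -Real.log (p x θ)) := fun θ =>
    (Real.measurable_log.comp (hp_x θ)).neg
  have hint_ll : ∀ θ, Integrable (fun x => -Real.log (p x θ)) ν := by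
    intro θ
    refine (integrable_const B).mono' (hll_meas θ).aestronglyMeasurable ?_
    filter_upwards [hb' θ] with x hx
    rw [Real.norm_eq_abs, abs_of_nonneg hx.1.1]; exact hx.1.2
  have hL0 : ∀ θ, 0 ≤ risk p ν θ := fun θ =>
    integral_nonneg_of_ae ((hb' θ).mono fun x hx => hx.1.1)
  have hLB : ∀ θ, risk p ν θ ≤ B := by
    intro θ
    calc risk p ν θ ≤ ∫ _x, B ∂ν :=
          integral_mono_ae (hint_ll θ) (integrable_const B)
            ((hb' θ).mono fun x hx => hx.1.2)
      _ = B := by simp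
  have hL_meas : Measurable (risk p ν) := by
    have hu : StronglyMeasurable (Function.uncurry fun (θ : Θ) (x : X) => -Real.log (p x θ)) := by
      apply Measurable.stronglyMeasurable
      exact (Real.measurable_log.comp (hp_meas.comp measurable_swap)).neg
    exact hu.integral_prod_right.measurable
  -- the "good" measurable set in X × Θ
  set S : Set (X × Θ) := {q | Real.exp (-B) ≤ p q.1 q.2 ∧ p q.1 q.2 ≤ 1} with hS_def
  have hS_meas : MeasurableSet S :=
    (measurableSet_le measurable_const hp_meas).inter
      (measurableSet_le hp_meas measurable_const)
  have hsection : ∀ θ, ν {x | (x, θ) ∉ S} = 0 := by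
    intro θ
    have := hbound θ
    rw [ae_iff] at this
    simpa [hS_def] using this
  -- ### Parts A and B, for every probability measure ρ
  have hAB : ∀ ρ : Measure Θ, IsProbabilityMeasure ρ →
      entropy μ f ≤ codeLength p ν ρ ∧ codeLength p ν ρ ≤ jensenBound p ν ρ := by
    intro ρ hρ
    haveI := hρ
    -- (ν.prod ρ) Sᶜ = 0
    have hprod_null : (ν.prod ρ) Sᶜ = 0 := by
      have h1 : (ρ.prod ν) (Prod.swap ⁻¹' Sᶜ) = 0 := by
        rw [Measure.prod_apply (hS_meas.compl.preimage measurable_swap)]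
        have hz : ∀ θ, ν (Prod.mk θ ⁻¹' (Prod.swap ⁻¹' Sᶜ)) = 0 := by
          intro θ
          have hseteq : (Prod.mk θ ⁻¹' (Prod.swap ⁻¹' Sᶜ)) = {x | (x, θ) ∉ S} := by
            ext x; simp [Prod.swap]
          rw [hseteq]; exact hsection θ
        rw [lintegral_congr hz, lintegral_zero]
      rw [← Measure.prod_swap, Measure.map_apply measurable_swap hS_meas.compl]
      exact h1
    have hae2 : ∀ᵐ x ∂ν, ∀ᵐ θ ∂ρ, (x, θ) ∈ S := by
      apply Measure.ae_ae_of_ae_prod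
      rw [ae_iff]
      exact hprod_null
    have hpred_meas : Measurable (predictive p ρ) :=
      hp_meas.stronglyMeasurable.integral_prod_right.measurable
    -- pointwise facts at ν-a.e. x
    have hmix : ∀ᵐ x ∂ν, (Real.exp (-B) ≤ predictive p ρ x ∧ predictive p ρ x ≤ 1) ∧
        (-Real.log (predictive p ρ x) ≤ ∫ θ, -Real.log (p x θ) ∂ρ) ∧
        (0 ≤ ∫ θ, -Real.log (p x θ) ∂ρ ∧ (∫ θ, -Real.log (p x θ) ∂ρ) ≤ B) ∧
        predictive p ρ x = (∫⁻ θ, ENNReal.ofReal (p x θ) ∂ρ).toReal := by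
      filter_upwards [hae2] with x hx
      have hx' : ∀ᵐ θ ∂ρ, Real.exp (-B) ≤ p x θ ∧ p x θ ≤ 1 := hx
      have hppos : ∀ᵐ θ ∂ρ, 0 < p x θ :=
        hx'.mono fun θ h => lt_of_lt_of_le (Real.exp_pos _) h.1
      have hpint : Integrable (fun θ => p x θ) ρ := by
        refine (integrable_const 1).mono' (hp_θ x).aestronglyMeasurable ?_
        filter_upwards [hx'] with θ h
        rw [Real.norm_eq_abs, abs_of_nonneg (le_trans (Real.exp_pos _).le h.1)]
        exact h.2
      have hlb : Real.exp (-B) ≤ predictive p ρ x := by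
        have := integral_mono_ae (integrable_const (Real.exp (-B))) hpint
          (hx'.mono fun θ h => h.1)
        simpa [predictive] using this
      have hub : predictive p ρ x ≤ 1 := by
        have := integral_mono_ae hpint (integrable_const 1)
          (hx'.mono fun θ h => h.2)
        simpa [predictive] using this
      have hpredpos : 0 < predictive p ρ x := lt_of_lt_of_le (Real.exp_pos _) hlb
      have hlog_int : Integrable (fun θ => Real.log (p x θ)) ρ := by
        refine (integrable_const B).mono'
          ((Real.measurable_log.comp (hp_θ x)).aestronglyMeasurable) ?_
        filter_upwards [hx'] with θ h
        have hp0 : 0 < p x θ := lt_of_lt_of_le (Real.exp_pos _) h.1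
        rw [Real.norm_eq_abs, abs_le]
        constructor
        · have := (Real.le_log_iff_exp_le hp0).2 h.1; linarith
        · have := Real.log_nonpos hp0.le h.2; linarith
      have hjensen : ∫ θ, Real.log (p x θ) ∂ρ ≤ Real.log (predictive p ρ x) :=
        integral_log_le_log_of_integral_le ρ hpredpos hppos hpint hlog_int le_rfl
      have hll_int : Integrable (fun θ => -Real.log (p x θ)) ρ := hlog_int.neg
      refine ⟨⟨hlb, hub⟩, ?_, ⟨?_, ?_⟩, ?_⟩
      · rw [integral_neg]; linarith
      · refine integral_nonneg_of_ae (hx'.mono fun θ h => ?_)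
        have hp0 : 0 < p x θ := lt_of_lt_of_le (Real.exp_pos _) h.1
        have := Real.log_nonpos hp0.le h.2
        show (0:ℝ) ≤ -Real.log (p x θ)
        linarith
      · calc (∫ θ, -Real.log (p x θ) ∂ρ) ≤ ∫ _θ, B ∂ρ := by
              refine integral_mono_ae hll_int (integrable_const B)
                (hx'.mono fun θ h => ?_)
              have hp0 : 0 < p x θ := lt_of_lt_of_le (Real.exp_pos _) h.1
              have := (Real.le_log_iff_exp_le hp0).2 h.1
              show -Real.log (p x θ) ≤ B
              linarith
          _ = B := by simp
      · rw [predictive, integral_eq_lintegral_of_nonneg_ae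
          (hppos.mono fun θ h => h.le) (hp_θ x).aestronglyMeasurable]
    -- inner-integral function measurability
    have hinner_meas : Measurable (fun x => ∫ θ, -Real.log (p x θ) ∂ρ) := by
      have hu : StronglyMeasurable (Function.uncurry fun (x : X) (θ : Θ) =>
          -Real.log (p x θ)) :=
        ((Real.measurable_log.comp hp_meas).neg).stronglyMeasurable
      exact hu.integral_prod_right.measurable
    have hcl_int : Integrable (fun x => -Real.log (predictive p ρ x)) ν := by
      refine (integrable_const B).mono'
        ((Real.measurable_log.comp hpred_meas).neg).aestronglyMeasurable ?_
      filter_upwards [hmix] with x hx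
      have hpredpos : 0 < predictive p ρ x := lt_of_lt_of_le (Real.exp_pos _) hx.1.1
      rw [Real.norm_eq_abs, abs_le]
      constructor
      · have := Real.log_nonpos hpredpos.le hx.1.2; linarith
      · have := (Real.le_log_iff_exp_le hpredpos).2 hx.1.1; linarith
    have hinner_int : Integrable (fun x => ∫ θ, -Real.log (p x θ) ∂ρ) ν := by
      refine (integrable_const B).mono' hinner_meas.aestronglyMeasurable ?_
      filter_upwards [hmix] with x hx
      rw [Real.norm_eq_abs, abs_of_nonneg hx.2.2.1.1]; exact hx.2.2.1.2
    -- Part B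
    have hpartB : codeLength p ν ρ ≤ jensenBound p ν ρ := by
      have step1 : codeLength p ν ρ ≤ ∫ x, ∫ θ, -Real.log (p x θ) ∂ρ ∂ν :=
        integral_mono_ae hcl_int hinner_int (hmix.mono fun x hx => hx.2.1)
      have hprod_int : Integrable (fun z : X × Θ => -Real.log (p z.1 z.2)) (ν.prod ρ) := by
        refine (integrable_const B).mono'
          ((Real.measurable_log.comp hp_meas).neg).aestronglyMeasurable ?_
        have hae : ∀ᵐ z ∂(ν.prod ρ), z ∈ S := by
          rw [ae_iff]; exact hprod_null
        filter_upwards [hae] with z hz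
        have hp0 : 0 < p z.1 z.2 := lt_of_lt_of_le (Real.exp_pos _) hz.1
        rw [Real.norm_eq_abs, abs_le]
        constructor
        · have := Real.log_nonpos hp0.le hz.2; linarith
        · have := (Real.le_log_iff_exp_le hp0).2 hz.1; linarith
      have step2 : ∫ x, ∫ θ, -Real.log (p x θ) ∂ρ ∂ν
          = ∫ θ, ∫ x, -Real.log (p x θ) ∂ν ∂ρ :=
        integral_integral_swap hprod_int
      have step3 : (∫ θ, ∫ x, -Real.log (p x θ) ∂ν ∂ρ) = jensenBound p ν ρ := rfl
      linarith [step1, step2, step3]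
    -- ### Part A: Gibbs' inequality
    have hpartA : entropy μ f ≤ codeLength p ν ρ := by
      by_cases hent : Integrable (fun x => f x * Real.log (f x)) μ
      · -- rewrite ν-integrals as μ-integrals with density f
        have hν_int : ∀ g : X → ℝ, ∫ x, g x ∂ν = ∫ x, f x * g x ∂μ := by
          intro g
          rw [hf]
          rw [show (fun x => ENNReal.ofReal (f x))
              = (fun x => (((f x).toNNReal : NNReal) : ℝ≥0∞)) from rfl,
            integral_withDensity_eq_integral_smul hf_meas.real_toNNReal g]
          refine integral_congr_ae (ae_of_all _ fun x => ?_)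
          simp [NNReal.smul_def, Real.coe_toNNReal _ (hf_nonneg x)]
        set Pl : X → ℝ≥0∞ := fun x => ∫⁻ θ, ENNReal.ofReal (p x θ) ∂ρ with hPl_def
        have hPl_meas : Measurable Pl :=
          (ENNReal.measurable_ofReal.comp hp_meas).lintegral_prod_right'
        have hPl_swap : ∫⁻ x, Pl x ∂μ = 1 := by
          have hinner : ∀ θ, ∫⁻ x, ENNReal.ofReal (p x θ) ∂μ = 1 := by
            intro θ
            have h := (hp_dens θ).measure_univ
            rwa [withDensity_apply _ MeasurableSet.univ, setLIntegral_univ] at h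
          rw [hPl_def]
          have hum : Measurable (Function.uncurry fun x (θ : Θ) =>
              ENNReal.ofReal (p x θ)) := ENNReal.measurable_ofReal.comp hp_meas
          rw [lintegral_lintegral_swap hum.aemeasurable]
          simp [hinner]
        have hPlfin : ∀ᵐ x ∂μ, Pl x < ∞ :=
          ae_lt_top hPl_meas (by rw [hPl_swap]; exact ENNReal.one_ne_top)
        have hP_int : Integrable (fun x => (Pl x).toReal) μ :=
          integrable_toReal_of_lintegral_ne_top hPl_meas.aemeasurable
            (by rw [hPl_swap]; exact ENNReal.one_ne_top)
        have hP_val : ∫ x, (Pl x).toReal ∂μ = 1 := by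
          rw [integral_toReal hPl_meas.aemeasurable hPlfin, hPl_swap]; rfl
        have hlf : ∫⁻ x, ENNReal.ofReal (f x) ∂μ = 1 := by
          have h : ν Set.univ = 1 := measure_univ
          rw [hf] at h
          rwa [withDensity_apply _ MeasurableSet.univ, setLIntegral_univ] at h
        have hf_int : Integrable f μ := by
          refine ⟨hf_meas.aestronglyMeasurable, ?_⟩
          rw [hasFiniteIntegral_iff_ofReal (ae_of_all _ hf_nonneg), hlf]
          exact ENNReal.one_lt_top
        have hf_val : ∫ x, f x ∂μ = 1 := by
          rw [integral_eq_lintegral_of_nonneg_ae (ae_of_all _ hf_nonneg)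
            hf_meas.aestronglyMeasurable, hlf]; rfl
        have htrans : ∀ᵐ x ∂μ, f x ≠ 0 →
            ((Real.exp (-B) ≤ predictive p ρ x ∧ predictive p ρ x ≤ 1) ∧
              predictive p ρ x = (Pl x).toReal) := by
          have h := hmix
          have hcm : Measurable (fun x => ENNReal.ofReal (f x)) :=
            ENNReal.measurable_ofReal.comp hf_meas
          rw [hf, ae_withDensity_iff hcm] at h
          filter_upwards [h] with x hx hfx
          have hne : ENNReal.ofReal (f x) ≠ 0 :=
            (ENNReal.ofReal_pos.2 (lt_of_le_of_ne (hf_nonneg x) (Ne.symm hfx))).ne'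
          obtain ⟨h1, _, _, h4⟩ := hx hne
          exact ⟨h1, h4⟩
        have hkey : ∀ᵐ x ∂μ, f x * Real.log (predictive p ρ x) -
            f x * Real.log (f x) ≤ (Pl x).toReal - f x := by
          filter_upwards [htrans] with x hx
          rcases eq_or_lt_of_le (hf_nonneg x) with h0 | hpos
          · rw [← h0]; simpa using ENNReal.toReal_nonneg
          · obtain ⟨⟨hl, hu⟩, heq⟩ := hx hpos.ne'
            have hpredpos : 0 < predictive p ρ x :=
              lt_of_lt_of_le (Real.exp_pos _) hl
            have hlog : Real.log (predictive p ρ x / f x)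
                ≤ predictive p ρ x / f x - 1 :=
              Real.log_le_sub_one_of_pos (div_pos hpredpos hpos)
            rw [Real.log_div hpredpos.ne' hpos.ne'] at hlog
            have hstep := mul_le_mul_of_nonneg_left hlog (hf_nonneg x)
            calc f x * Real.log (predictive p ρ x) - f x * Real.log (f x)
                = f x * (Real.log (predictive p ρ x) - Real.log (f x)) := by ring
              _ ≤ f x * (predictive p ρ x / f x - 1) := hstep
              _ = predictive p ρ x - f x := by
                  rw [mul_sub, mul_one, mul_div_cancel₀ _ hpos.ne']
              _ = (Pl x).toReal - f x := by rw [heq]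
        have hflogpred_int :
            Integrable (fun x => f x * Real.log (predictive p ρ x)) μ := by
          refine (hf_int.const_mul B).mono'
            ((hf_meas.mul (Real.measurable_log.comp hpred_meas)).aestronglyMeasurable) ?_
          filter_upwards [htrans] with x hx
          rcases eq_or_lt_of_le (hf_nonneg x) with h0 | hpos
          · rw [← h0]; simp
          · obtain ⟨⟨hl, hu⟩, _⟩ := hx hpos.ne'
            have hpredpos : 0 < predictive p ρ x :=
              lt_of_lt_of_le (Real.exp_pos _) hl
            rw [Real.norm_eq_abs, abs_mul, abs_of_nonneg (hf_nonneg x)]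
            have h1 : |Real.log (predictive p ρ x)| ≤ B := by
              rw [abs_le]
              constructor
              · have := (Real.le_log_iff_exp_le hpredpos).2 hl; linarith
              · have := Real.log_nonpos hpredpos.le hu; linarith
            calc f x * |Real.log (predictive p ρ x)| ≤ f x * B :=
                  mul_le_mul_of_nonneg_left h1 (hf_nonneg x)
              _ = B * f x := mul_comm _ _
        have hsub_int : Integrable (fun x => f x * Real.log (predictive p ρ x)
            - f x * Real.log (f x)) μ := hflogpred_int.sub hent
        have hPf_int : Integrable (fun x => (Pl x).toReal - f x) μ :=
          hP_int.sub hf_int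
        have hmono := integral_mono_ae hsub_int hPf_int hkey
        rw [integral_sub hflogpred_int hent, integral_sub hP_int hf_int,
          hP_val, hf_val] at hmono
        have hcode : codeLength p ν ρ
            = -∫ x, f x * Real.log (predictive p ρ x) ∂μ := by
          rw [codeLength, hν_int (fun x => -Real.log (predictive p ρ x))]
          rw [← integral_neg]
          exact integral_congr_ae (ae_of_all _ fun x => by ring)
        rw [entropy, hcode]
        linarith
      · have h0 : entropy μ f = 0 := by rw [entropy, integral_undef hent, neg_zero]
        rw [h0]
        refine integral_nonneg_of_ae (hmix.mono fun x hx => ?_)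
        have hpredpos : 0 < predictive p ρ x := lt_of_lt_of_le (Real.exp_pos _) hx.1.1
        have := Real.log_nonpos hpredpos.le hx.1.2
        show (0:ℝ) ≤ -Real.log (predictive p ρ x)
        linarith
    exact ⟨hpartA, hpartB⟩
  -- ### Part C: the concentration argument
  set piν : Measure (Fin n → X) := Measure.pi fun _ : Fin n => ν with hpiν_def
  haveI hpiprob : IsProbabilityMeasure piν := by rw [hpiν_def]; infer_instance
  set G : Θ → (Fin n → X) → ℝ :=
    fun θ D => (n : ℝ) * c * risk p ν θ + ∑ i, Real.log (p (D i) θ) with hG_def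
  have hG_meas : Measurable (fun q : (Fin n → X) × Θ => G q.2 q.1) := by
    simp only [hG_def]
    apply Measurable.add
    · exact (hL_meas.comp measurable_snd).const_mul _
    · apply Finset.measurable_sum
      intro i _
      have hmi : Measurable (fun q : (Fin n → X) × Θ => p (q.1 i) q.2) := by
        have heq : (fun q : (Fin n → X) × Θ => p (q.1 i) q.2)
            = Function.uncurry p ∘ (fun q : (Fin n → X) × Θ => (q.1 i, q.2)) := rfl
        rw [heq]
        exact hp_meas.comp (((measurable_pi_apply i).comp measurable_fst).prodMk
          measurable_snd)
      exact Real.measurable_log.comp hmi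
  set F : (Fin n → X) → ℝ≥0∞ :=
    fun D => ∫⁻ θ, ENNReal.ofReal (Real.exp (G θ D)) ∂pri with hF_def
  have hF_meas : Measurable F :=
    (ENNReal.measurable_ofReal.comp
      (Real.measurable_exp.comp hG_meas)).lintegral_prod_right'
  have hθbound : ∀ θ, ∫⁻ D, ENNReal.ofReal (Real.exp (G θ D)) ∂piν ≤ 1 := by
    intro θ
    have hDae : ∀ᵐ D ∂piν, ∀ i, Real.exp (-B) ≤ p (D i) θ ∧ p (D i) θ ≤ 1 := by
      rw [ae_all_iff]
      intro i
      rw [ae_iff]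
      have hseteq : {D : Fin n → X | ¬(Real.exp (-B) ≤ p (D i) θ ∧ p (D i) θ ≤ 1)}
          = Function.eval i ⁻¹' {x : X | (x, θ) ∉ S} := rfl
      rw [hseteq, hpiν_def]
      exact Measure.pi_eval_preimage_null _ (hsection θ)
    have hcong : ∀ᵐ D ∂piν, ENNReal.ofReal (Real.exp (G θ D))
        = ENNReal.ofReal (Real.exp ((n : ℝ) * c * risk p ν θ))
          * ∏ i, ENNReal.ofReal (p (D i) θ) := by
      filter_upwards [hDae] with D hD
      have hpos : ∀ i : Fin n, 0 < p (D i) θ :=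
        fun i => lt_of_lt_of_le (Real.exp_pos _) (hD i).1
      have h1 : Real.exp (G θ D)
          = Real.exp ((n:ℝ) * c * risk p ν θ) * ∏ i, p (D i) θ := by
        simp only [hG_def]
        rw [Real.exp_add, Real.exp_sum]
        congr 1
        exact Finset.prod_congr rfl fun i _ => Real.exp_log (hpos i)
      rw [h1, ENNReal.ofReal_mul (Real.exp_pos _).le,
        ENNReal.ofReal_prod_of_nonneg (fun i _ => (hpos i).le)]
    rw [lintegral_congr_ae hcong,
      lintegral_const_mul' _ _ ENNReal.ofReal_ne_top, hpiν_def,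
      lintegral_pi_prod_pow ν (fun x => ENNReal.ofReal (p x θ))
        (ENNReal.measurable_ofReal.comp (hp_x θ)) n]
    have hp_int : Integrable (fun x => p x θ) ν := by
      refine (integrable_const 1).mono' (hp_x θ).aestronglyMeasurable ?_
      filter_upwards [hb' θ] with x hx
      rw [Real.norm_eq_abs, abs_of_nonneg hx.2.1.le]; exact hx.2.2
    have hone : ∫⁻ x, ENNReal.ofReal (p x θ) ∂ν = ENNReal.ofReal (∫ x, p x θ ∂ν) :=
      (ofReal_integral_eq_lintegral_ofReal hp_int
        ((hb' θ).mono fun x hx => hx.2.1.le)).symm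
    have hmean : ∫ x, p x θ ∂ν ≤ Real.exp (-(c * risk p ν θ)) := by
      have hptw : ∀ᵐ x ∂ν, p x θ ≤ 1 - c * (-Real.log (p x θ)) := by
        filter_upwards [hb' θ] with x hx
        have heq : p x θ = Real.exp (-(-Real.log (p x θ))) := by
          rw [neg_neg, Real.exp_log hx.2.1]
        calc p x θ = Real.exp (-(-Real.log (p x θ))) := heq
          _ ≤ 1 - c * (-Real.log (p x θ)) := exp_neg_le_chord hB hx.1.1 hx.1.2
      have hint2 : Integrable (fun x => 1 - c * (-Real.log (p x θ))) ν :=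
        (integrable_const 1).sub ((hint_ll θ).const_mul c)
      have h2 := integral_mono_ae hp_int hint2 hptw
      rw [integral_sub (integrable_const 1) ((hint_ll θ).const_mul c),
        integral_const, integral_const_mul] at h2
      simp only [measure_univ, probReal_univ, ENNReal.toReal_one, smul_eq_mul, one_mul] at h2
      have h3 : 1 - c * risk p ν θ ≤ Real.exp (-(c * risk p ν θ)) := by
        have := Real.add_one_le_exp (-(c * risk p ν θ)); linarith
      have h4 : (∫ x, -Real.log (p x θ) ∂ν) = risk p ν θ := rfl
      rw [h4] at h2
      linarith
    calc ENNReal.ofReal (Real.exp ((n : ℝ) * c * risk p ν θ))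
          * (∫⁻ x, ENNReal.ofReal (p x θ) ∂ν) ^ n
        ≤ ENNReal.ofReal (Real.exp ((n : ℝ) * c * risk p ν θ))
          * (ENNReal.ofReal (Real.exp (-(c * risk p ν θ)))) ^ n := by
          gcongr
          rw [hone]; exact ENNReal.ofReal_le_ofReal hmean
      _ = ENNReal.ofReal (Real.exp ((n : ℝ) * c * risk p ν θ)
            * Real.exp (-(c * risk p ν θ)) ^ n) := by
          rw [← ENNReal.ofReal_pow (Real.exp_pos _).le,
            ← ENNReal.ofReal_mul (Real.exp_pos _).le]
      _ = 1 := by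
          rw [← Real.exp_nat_mul, ← Real.exp_add]
          have hz : (n:ℝ) * c * risk p ν θ + (n:ℝ) * -(c * risk p ν θ) = 0 := by ring
          rw [hz, Real.exp_zero, ENNReal.ofReal_one]
  have hF1 : ∫⁻ D, F D ∂piν ≤ 1 := by
    have hum : AEMeasurable (Function.uncurry fun (D : Fin n → X) (θ : Θ) =>
        ENNReal.ofReal (Real.exp (G θ D))) (piν.prod pri) :=
      (ENNReal.measurable_ofReal.comp (Real.measurable_exp.comp hG_meas)).aemeasurable
    calc ∫⁻ D, F D ∂piν
        = ∫⁻ θ, ∫⁻ D, ENNReal.ofReal (Real.exp (G θ D)) ∂piν ∂pri :=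
          lintegral_lintegral_swap hum
      _ ≤ ∫⁻ _θ, 1 ∂pri := lintegral_mono fun θ => hθbound θ
      _ = 1 := by simp
  have hbad_meas : MeasurableSet {D | ENNReal.ofReal (1/ξ) ≤ F D} :=
    measurableSet_le measurable_const hF_meas
  have hbad_le : piν {D | ENNReal.ofReal (1/ξ) ≤ F D} ≤ ENNReal.ofReal ξ := by
    have hmark := (mul_meas_ge_le_lintegral₀ hF_meas.aemeasurable
      (ENNReal.ofReal (1/ξ))).trans hF1
    rw [mul_comm] at hmark
    have hξ0 : ENNReal.ofReal (1/ξ) ≠ 0 := (ENNReal.ofReal_pos.2 (by positivity)).ne'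
    rw [← ENNReal.le_div_iff_mul_le (Or.inl hξ0) (Or.inl ENNReal.ofReal_ne_top)] at hmark
    refine hmark.trans (le_of_eq ?_)
    rw [one_div, one_div, ENNReal.ofReal_inv_of_pos hξ, inv_inv]
  have hEg : ENNReal.ofReal (1 - ξ) ≤ piν ({D | ENNReal.ofReal (1/ξ) ≤ F D}ᶜ) := by
    rw [measure_compl hbad_meas (measure_ne_top _ _), measure_univ]
    have h1 : ENNReal.ofReal (1-ξ) + ENNReal.ofReal ξ = 1 := by
      rw [← ENNReal.ofReal_add (by linarith) hξ.le]; norm_num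
    calc ENNReal.ofReal (1-ξ) ≤ 1 - ENNReal.ofReal ξ :=
          le_of_eq (ENNReal.eq_sub_of_add_eq ENNReal.ofReal_ne_top h1)
      _ ≤ 1 - piν {D | ENNReal.ofReal (1/ξ) ≤ F D} := tsub_le_tsub_left hbad_le 1
  have hT : ∀ᵐ D ∂piν, ∀ᵐ θ ∂pri, ∀ i,
      Real.exp (-B) ≤ p (D i) θ ∧ p (D i) θ ≤ 1 := by
    set W : Set ((Fin n → X) × Θ) := {q | ∀ i, (q.1 i, q.2) ∈ S} with hW_def
    have hW_meas : MeasurableSet W := by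
      have hWeq : W = ⋂ i, (fun q : (Fin n → X) × Θ => (q.1 i, q.2)) ⁻¹' S := by
        ext q; simp [hW_def]
      rw [hWeq]
      exact MeasurableSet.iInter fun i => hS_meas.preimage
        (((measurable_pi_apply i).comp measurable_fst).prodMk measurable_snd)
    have hWnull : (piν.prod pri) Wᶜ = 0 := by
      have h1 : (pri.prod piν) (Prod.swap ⁻¹' Wᶜ) = 0 := by
        rw [Measure.prod_apply (hW_meas.compl.preimage measurable_swap)]
        have hz : ∀ θ, piν (Prod.mk θ ⁻¹' (Prod.swap ⁻¹' Wᶜ)) = 0 := by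
          intro θ
          have hseteq : Prod.mk θ ⁻¹' (Prod.swap ⁻¹' Wᶜ)
              = {D : Fin n → X | ¬ ∀ i, (D i, θ) ∈ S} := rfl
          rw [hseteq]
          have hsub : {D : Fin n → X | ¬ ∀ i, (D i, θ) ∈ S}
              ⊆ ⋃ i, Function.eval i ⁻¹' {x | (x, θ) ∉ S} := by
            intro D hD
            obtain ⟨i, hi⟩ := not_forall.1 hD
            exact Set.mem_iUnion.2 ⟨i, hi⟩
          refine measure_mono_null hsub (measure_iUnion_null fun i => ?_)
          rw [hpiν_def]
          exact Measure.pi_eval_preimage_null _ (hsection θ)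
        rw [lintegral_congr hz, lintegral_zero]
      rw [← Measure.prod_swap, Measure.map_apply measurable_swap hW_meas.compl]
      exact h1
    have hae := Measure.ae_ae_of_ae_prod
      (show ∀ᵐ q ∂(piν.prod pri), q ∈ W by rw [ae_iff]; exact hWnull)
    filter_upwards [hae] with D hD
    filter_upwards [hD] with θ hθ
    exact hθ
  have hTnull : piν {D : Fin n → X | ∀ᵐ θ ∂pri, ∀ i,
      Real.exp (-B) ≤ p (D i) θ ∧ p (D i) θ ≤ 1}ᶜ = 0 := by
    rw [ae_iff] at hT
    exact hT
  refine le_trans hEg ?_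
  rw [← measure_inter_conull hTnull]
  refine measure_mono ?_
  rintro D ⟨hD1, hD2⟩
  intro ρ hρ
  haveI := hρ
  obtain ⟨hA, hBJ⟩ := hAB ρ hρ
  refine ⟨hA, hBJ, ?_⟩
  intro hKL
  by_cases hcond : ρ ≪ pri ∧
      Integrable (fun θ => Real.log ((ρ.rnDeriv pri θ).toReal)) ρ
  swap
  · exact absurd (by unfold klDiv'; rw [if_neg hcond]) hKL
  obtain ⟨hac, hri⟩ := hcond
  have hkl_eq : klDiv' ρ pri
      = ENNReal.ofReal (∫ θ, Real.log ((ρ.rnDeriv pri θ).toReal) ∂ρ) := by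
    unfold klDiv'; rw [if_pos ⟨hac, hri⟩]
  have hθae : ∀ᵐ θ ∂ρ, ∀ i, Real.exp (-B) ≤ p (D i) θ ∧ p (D i) θ ≤ 1 :=
    hD2.filter_mono hac.ae_le
  have hLint : Integrable (risk p ν) ρ := by
    refine (integrable_const B).mono' hL_meas.aestronglyMeasurable
      (ae_of_all _ fun θ => ?_)
    rw [Real.norm_eq_abs, abs_of_nonneg (hL0 θ)]; exact hLB θ
  have hemp_meas : Measurable (empRisk p n D) := by
    apply Measurable.const_mul
    exact Finset.measurable_sum _ fun i _ =>
      (Real.measurable_log.comp (hp_θ (D i))).neg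
  have hemp_bounds : ∀ᵐ θ ∂ρ, 0 ≤ empRisk p n D θ ∧ empRisk p n D θ ≤ B := by
    filter_upwards [hθae] with θ hθ
    have h1 : ∀ i : Fin n, 0 ≤ -Real.log (p (D i) θ) ∧ -Real.log (p (D i) θ) ≤ B := by
      intro i
      have hp0 : 0 < p (D i) θ := lt_of_lt_of_le (Real.exp_pos _) (hθ i).1
      constructor
      · have := Real.log_nonpos hp0.le (hθ i).2; linarith
      · have := (Real.le_log_iff_exp_le hp0).2 (hθ i).1; linarith
    constructor
    · exact mul_nonneg (by positivity) (Finset.sum_nonneg fun i _ => (h1 i).1)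
    · rw [empRisk]
      have hsum : ∑ i : Fin n, -Real.log (p (D i) θ) ≤ (n:ℝ) * B := by
        calc ∑ i : Fin n, -Real.log (p (D i) θ) ≤ ∑ _i : Fin n, B :=
              Finset.sum_le_sum fun i _ => (h1 i).2
          _ = (n:ℝ) * B := by simp [Finset.sum_const, mul_comm]
      calc (1/(n:ℝ)) * ∑ i : Fin n, -Real.log (p (D i) θ)
          ≤ (1/(n:ℝ)) * ((n:ℝ) * B) :=
            mul_le_mul_of_nonneg_left hsum (by positivity)
        _ = B := by field_simp
  have hemp_int : Integrable (empRisk p n D) ρ := by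
    refine (integrable_const B).mono' hemp_meas.aestronglyMeasurable ?_
    filter_upwards [hemp_bounds] with θ h
    rw [Real.norm_eq_abs, abs_of_nonneg h.1]; exact h.2
  have hsum_eq : ∀ θ, ∑ i : Fin n, Real.log (p (D i) θ)
      = -((n:ℝ) * empRisk p n D θ) := by
    intro θ
    have hneg : ∑ i : Fin n, -Real.log (p (D i) θ)
        = -∑ i : Fin n, Real.log (p (D i) θ) := by
      rw [Finset.sum_neg_distrib]
    simp only [empRisk, hneg]
    field_simp
  have hsum_int : Integrable (fun θ => ∑ i : Fin n, Real.log (p (D i) θ)) ρ :=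
    ((hemp_int.const_mul (n:ℝ)).neg).congr (ae_of_all _ fun θ => (hsum_eq θ).symm)
  have hGD_meas : Measurable (fun θ => G θ D) :=
    hG_meas.comp (measurable_const.prodMk measurable_id)
  have hG_int : Integrable (fun θ => G θ D) ρ := by
    simp only [hG_def]
    exact (hLint.const_mul _).add hsum_int
  have hr_meas : Measurable (fun θ => (ρ.rnDeriv pri θ).toReal) :=
    (Measure.measurable_rnDeriv ρ pri).ennreal_toReal
  have hrpos : ∀ᵐ θ ∂ρ, 0 < ρ.rnDeriv pri θ := Measure.rnDeriv_pos hac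
  have hrfin : ∀ᵐ θ ∂ρ, ρ.rnDeriv pri θ < ∞ :=
    (Measure.rnDeriv_lt_top ρ pri).filter_mono hac.ae_le
  have hr'pos : ∀ᵐ θ ∂ρ, 0 < (ρ.rnDeriv pri θ).toReal := by
    filter_upwards [hrpos, hrfin] with θ h1 h2
    exact ENNReal.toReal_pos h1.ne' h2.ne
  set ψ : Θ → ℝ := fun θ => Real.exp (G θ D) / (ρ.rnDeriv pri θ).toReal with hψ_def
  have hψ_meas : Measurable ψ := (Real.measurable_exp.comp hGD_meas).div hr_meas
  have hψpos : ∀ᵐ θ ∂ρ, 0 < ψ θ :=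
    hr'pos.mono fun θ h => div_pos (Real.exp_pos _) h
  have hD1' : ¬ ENNReal.ofReal (1/ξ) ≤ F D := hD1
  have hFD : F D ≤ ENNReal.ofReal (1/ξ) := (not_le.1 hD1').le
  have hlψ : ∫⁻ θ, ENNReal.ofReal (ψ θ) ∂ρ ≤ ENNReal.ofReal (1/ξ) := by
    have hom : AEMeasurable (fun θ => ENNReal.ofReal (ψ θ)) pri :=
      (ENNReal.measurable_ofReal.comp hψ_meas).aemeasurable
    rw [← lintegral_rnDeriv_mul hac hom]
    refine le_trans (lintegral_mono_ae ?_) hFD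
    filter_upwards [Measure.rnDeriv_lt_top ρ pri] with θ hfin
    by_cases h0 : ρ.rnDeriv pri θ = 0
    · simp [h0]
    · have ht0 : (ρ.rnDeriv pri θ).toReal ≠ 0 :=
        ENNReal.toReal_ne_zero.2 ⟨h0, hfin.ne⟩
      calc ρ.rnDeriv pri θ * ENNReal.ofReal (ψ θ)
          = ENNReal.ofReal ((ρ.rnDeriv pri θ).toReal) * ENNReal.ofReal (ψ θ) := by
            rw [ENNReal.ofReal_toReal hfin.ne]
        _ = ENNReal.ofReal ((ρ.rnDeriv pri θ).toReal * ψ θ) :=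
            (ENNReal.ofReal_mul ENNReal.toReal_nonneg).symm
        _ ≤ ENNReal.ofReal (Real.exp (G θ D)) := by
            apply ENNReal.ofReal_le_ofReal
            rw [hψ_def]
            rw [mul_div_cancel₀ _ ht0]
  have hψ_int : Integrable ψ ρ := by
    refine ⟨hψ_meas.aestronglyMeasurable, ?_⟩
    rw [hasFiniteIntegral_iff_ofReal (hψpos.mono fun θ h => h.le)]
    exact lt_of_le_of_lt hlψ ENNReal.ofReal_lt_top
  have hψ_sum : ∫ θ, ψ θ ∂ρ ≤ 1/ξ := by
    rw [integral_eq_lintegral_of_nonneg_ae (hψpos.mono fun θ h => h.le)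
      hψ_meas.aestronglyMeasurable]
    exact ENNReal.toReal_le_of_le_ofReal (by positivity) hlψ
  have hψ_log : ∀ᵐ θ ∂ρ, Real.log (ψ θ)
      = G θ D - Real.log ((ρ.rnDeriv pri θ).toReal) := by
    filter_upwards [hr'pos] with θ h
    rw [hψ_def]
    rw [Real.log_div (Real.exp_ne_zero _) h.ne', Real.log_exp]
  have hlogψ_int : Integrable (fun θ => Real.log (ψ θ)) ρ :=
    (hG_int.sub hri).congr (hψ_log.mono fun θ h => h.symm)
  have hjensen := integral_log_le_log_of_integral_le ρ
    (show (0:ℝ) < 1/ξ by positivity) hψpos hψ_int hlogψ_int hψ_sum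
  have hsplit : ∫ θ, Real.log (ψ θ) ∂ρ
      = ∫ θ, G θ D ∂ρ - ∫ θ, Real.log ((ρ.rnDeriv pri θ).toReal) ∂ρ := by
    rw [integral_congr_ae hψ_log, integral_sub hG_int hri]
  have hGval : ∫ θ, G θ D ∂ρ = (n:ℝ) * c * jensenBound p ν ρ
      - (n:ℝ) * ∫ θ, empRisk p n D θ ∂ρ := by
    simp only [hG_def]
    rw [integral_add (hLint.const_mul _) hsum_int, integral_const_mul]
    have h2 : ∫ θ, ∑ i : Fin n, Real.log (p (D i) θ) ∂ρ
        = -((n:ℝ) * ∫ θ, empRisk p n D θ ∂ρ) := by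
      rw [integral_congr_ae (ae_of_all _ hsum_eq), integral_neg, integral_const_mul]
    rw [h2]
    have h3 : jensenBound p ν ρ = ∫ θ, risk p ν θ ∂ρ := rfl
    rw [h3]; ring
  have hImax : ∫ θ, Real.log ((ρ.rnDeriv pri θ).toReal) ∂ρ
      ≤ (klDiv' ρ pri).toReal := by
    rw [hkl_eq, ENNReal.toReal_ofReal']
    exact le_max_left _ _
  have hmain : (n:ℝ) * c * jensenBound p ν ρ - (n:ℝ) * ∫ θ, empRisk p n D θ ∂ρ
      ≤ (klDiv' ρ pri).toReal + Real.log (1/ξ) := by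
    rw [hsplit, hGval] at hjensen
    linarith
  rw [hKc]
  have h2 : jensenBound p ν ρ ≤ ((n:ℝ) * (∫ θ, empRisk p n D θ ∂ρ)
      + ((klDiv' ρ pri).toReal + Real.log (1/ξ))) / ((n:ℝ) * c) := by
    rw [le_div_iff₀ (by positivity)]
    nlinarith [hmain]
  refine h2.trans (le_of_eq ?_)
  field_simp


end
end

section
/- PAC bound for point estimates under a discrete prior: Let S ⊆ Θ be countable and let π_F be the discrete prior π_F = Σ_{θ′ ∈ S} w_{θ′} δ_{θ′} with weights w_{θ′} ≥ 0 summing to 1. Fix ξ ∈ (0,1) and n ≥ 1. Then, with ν^n-probability at least 1 − ξ over the draw of an i.i.d. sample D = (x_1, …, x_n) from ν, simultaneously for all θ ∈ S with w_θ > 0: L(θ) ≤ (B/(1 − e^{−B})) · ( L̂(D, θ) − (ln w_θ + ln ξ)/n ). -/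
open MeasureTheory Real
open scoped ENNReal

noncomputable section

lemma chernoff_aux {X : Type*} [MeasurableSpace X] (ν : Measure X)
    [IsProbabilityMeasure ν] (ℓ : X → ℝ) (hmeas : Measurable ℓ)
    (B : ℝ) (hB : 0 < B) (hbd : ∀ᵐ x ∂ν, 0 ≤ ℓ x ∧ ℓ x ≤ B)
    (n : ℕ) (t : ℝ) :
    (Measure.pi fun _ : Fin n => ν)
      {D : Fin n → X | ∑ i : Fin n, ℓ (D i) <
        ((1 - Real.exp (-B)) / B) * ((n : ℝ) * ∫ x, ℓ x ∂ν) + t}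
      ≤ ENNReal.ofReal (Real.exp t) := by
  letI : MeasureSpace X := ⟨ν⟩
  haveI hvp : IsProbabilityMeasure (volume : Measure X) := ‹IsProbabilityMeasure ν›
  set c : ℝ := (1 - Real.exp (-B)) / B with hc
  set L : ℝ := ∫ x, ℓ x ∂ν with hL
  have hexpB1 : Real.exp (-B) < 1 := by
    rw [Real.exp_lt_one_iff]; linarith
  have hc_pos : 0 < c := div_pos (by linarith) hB
  -- pointwise convexity inequality
  have key : ∀ x : ℝ, 0 ≤ x → x ≤ B → Real.exp (-x) ≤ 1 - c * x := by
    intro x hx0 hxB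
    have hs0 : 0 ≤ x / B := div_nonneg hx0 hB.le
    have hs1 : x / B ≤ 1 := (div_le_one hB).2 hxB
    have hcx := convexOn_exp.2 (Set.mem_univ (0:ℝ)) (Set.mem_univ (-B))
      (show (0:ℝ) ≤ 1 - x / B by linarith) hs0 (by ring)
    have h1 : (1 - x / B) • (0:ℝ) + (x / B) • (-B) = -x := by
      simp only [smul_eq_mul, mul_zero, zero_add, mul_neg, div_mul_cancel₀ x hB.ne']
    rw [h1] at hcx
    have h2 : (1 - x/B) • Real.exp 0 + (x/B) • Real.exp (-B) = 1 - c * x := by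
      rw [Real.exp_zero]
      simp only [smul_eq_mul, hc]
      field_simp
      ring
    linarith [hcx, h2.ge]
  -- integrability of ℓ
  have hint_ℓ : Integrable ℓ ν := by
    refine Integrable.mono' (integrable_const B) hmeas.aestronglyMeasurable ?_
    filter_upwards [hbd] with x hx
    rw [Real.norm_eq_abs, abs_le]
    exact ⟨by linarith [hx.1], hx.2⟩
  have hL0 : 0 ≤ L := integral_nonneg_of_ae (hbd.mono fun x hx => hx.1)
  -- the moment function
  set f : X → ℝ := fun x => Real.exp (-ℓ x) with hf
  have hf_meas : Measurable f := Real.measurable_exp.comp hmeas.neg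
  have hf_nonneg : ∀ x, 0 ≤ f x := fun x => (Real.exp_pos _).le
  have hf_int : Integrable f ν := by
    refine Integrable.mono' (integrable_const (1:ℝ)) hf_meas.aestronglyMeasurable ?_
    filter_upwards [hbd] with x hx
    rw [Real.norm_eq_abs, abs_of_nonneg (hf_nonneg x)]
    calc f x = Real.exp (-ℓ x) := rfl
      _ ≤ Real.exp 0 := Real.exp_le_exp.2 (by linarith [hx.1])
      _ = 1 := Real.exp_zero
  have hI0 : 0 ≤ ∫ x, f x ∂ν := integral_nonneg hf_nonneg
  have hI_le : ∫ x, f x ∂ν ≤ Real.exp (-(c * L)) := by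
    have h1 : ∫ x, f x ∂ν ≤ ∫ x, (1 - c * ℓ x) ∂ν := by
      refine integral_mono_ae hf_int ((integrable_const (1:ℝ)).sub (hint_ℓ.const_mul c)) ?_
      filter_upwards [hbd] with x hx
      exact key _ hx.1 hx.2
    have h2 : ∫ x, (1 - c * ℓ x) ∂ν = 1 - c * L := by
      rw [integral_sub (integrable_const (1:ℝ)) (hint_ℓ.const_mul c),
        integral_const, integral_const_mul]
      simp [hL]
    have h3 : 1 - c * L ≤ Real.exp (-(c * L)) := by
      have := Real.add_one_le_exp (-(c*L)); linarith
    linarith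
  -- product function over the sample
  set F : (Fin n → X) → ℝ := fun D => ∏ i : Fin n, f (D i) with hF
  have hF_meas : Measurable F :=
    Finset.measurable_prod _ fun i _ => hf_meas.comp (measurable_pi_apply i)
  have hvol : (Measure.pi fun _ : Fin n => ν) = (volume : Measure (Fin n → X)) := by
    rw [MeasureTheory.volume_pi]; rfl
  have hF_int : Integrable F (Measure.pi fun _ : Fin n => ν) := by
    rw [hvol]
    exact Integrable.fintype_prod (f := fun _ : Fin n => f) fun i => hf_int
  have hF_nonneg : ∀ D, 0 ≤ F D := fun D => Finset.prod_nonneg fun i _ => hf_nonneg _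
  have hlint : ∫⁻ D, ENNReal.ofReal (F D) ∂(Measure.pi fun _ : Fin n => ν)
      ≤ ENNReal.ofReal (Real.exp (-(c * ((n:ℝ) * L)))) := by
    rw [← ofReal_integral_eq_lintegral_ofReal hF_int
      (Filter.Eventually.of_forall hF_nonneg)]
    apply ENNReal.ofReal_le_ofReal
    have hprod : ∫ D, F D ∂(Measure.pi fun _ : Fin n => ν) = (∫ x, f x ∂ν) ^ n := by
      rw [hvol]
      rw [← hvol]; simpa [hF] using MeasureTheory.integral_fintype_prod_eq_pow (ι := Fin n) (μ := ν) f
    rw [hprod]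
    calc (∫ x, f x ∂ν) ^ n ≤ (Real.exp (-(c * L))) ^ n := pow_le_pow_left₀ hI0 hI_le n
      _ = Real.exp (-(c * ((n:ℝ) * L))) := by
          rw [← Real.exp_nat_mul]
          congr 1
          ring
  set ε : ℝ≥0∞ := ENNReal.ofReal (Real.exp (-(c * ((n:ℝ) * L) + t))) with hε
  have hsubset : {D : Fin n → X | ∑ i : Fin n, ℓ (D i) < c * ((n:ℝ) * L) + t}
      ⊆ {D : Fin n → X | ε ≤ ENNReal.ofReal (F D)} := by
    intro D hD
    simp only [Set.mem_setOf_eq] at hD ⊢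
    rw [hε]
    apply ENNReal.ofReal_le_ofReal
    have hFD : F D = Real.exp (∑ i : Fin n, -ℓ (D i)) :=
      (Real.exp_sum Finset.univ fun i => -ℓ (D i)).symm
    have hsum : ∑ i : Fin n, -ℓ (D i) = -∑ i : Fin n, ℓ (D i) := by simp
    rw [hFD, hsum]
    exact Real.exp_le_exp.2 (by linarith)
  calc ((Measure.pi fun _ : Fin n => ν) {D : Fin n → X | ∑ i : Fin n, ℓ (D i) < c * ((n:ℝ) * L) + t}) ≤ (Measure.pi fun _ : Fin n => ν) {D | ε ≤ ENNReal.ofReal (F D)} :=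
        measure_mono hsubset
    _ ≤ (∫⁻ D, ENNReal.ofReal (F D) ∂(Measure.pi fun _ : Fin n => ν)) / ε :=
        meas_ge_le_lintegral_div (hF_meas.ennreal_ofReal.aemeasurable)
          (by rw [hε]; exact (ENNReal.ofReal_pos.2 (Real.exp_pos _)).ne')
          (by rw [hε]; exact ENNReal.ofReal_ne_top)
    _ ≤ ENNReal.ofReal (Real.exp (-(c * ((n:ℝ) * L)))) / ε :=
        ENNReal.div_le_div_right hlint _
    _ = ENNReal.ofReal (Real.exp (-(c * ((n:ℝ) * L))) /
          Real.exp (-(c * ((n:ℝ) * L) + t))) := by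
        rw [hε, ENNReal.ofReal_div_of_pos (Real.exp_pos _)]
    _ = ENNReal.ofReal (Real.exp t) := by
        rw [← Real.exp_sub]
        congr 1
        ring

set_option maxHeartbeats 1000000 in
/-- PAC bound for point estimates under a countable discrete
prior `π_F = Σ_{θ'∈S} w_{θ'} δ_{θ'}`: with `ν^n`-probability at least `1 − ξ`
over an i.i.d. sample `D`, simultaneously for all `θ ∈ S` with `w_θ > 0`,
`L(θ) ≤ (B/(1−e^{−B})) (L̂(D,θ) − (ln w_θ + ln ξ)/n)`
(here `KL(δ_θ, π_F) = −ln w_θ`). -/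
theorem pac_bound_point_estimates
    {X : Type*} [MeasurableSpace X] (μ : Measure X) [SigmaFinite μ]
    (ν : Measure X) [IsProbabilityMeasure ν]
    {Θ : Type*} [MeasurableSpace Θ]
    (p : X → Θ → ℝ) (hp_meas : Measurable (Function.uncurry p))
    (hp_dens : ∀ θ, IsProbabilityMeasure
      (μ.withDensity (fun x => ENNReal.ofReal (p x θ))))
    (B : ℝ) (hB : 0 < B)
    (hbound : ∀ θ, ∀ᵐ x ∂ν, Real.exp (-B) ≤ p x θ ∧ p x θ ≤ 1)
    (S : Set Θ) (hS : S.Countable)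
    (w : Θ → ℝ) (hw_nonneg : ∀ θ ∈ S, 0 ≤ w θ)
    (hw_sum : ∑' θ : S, w θ = 1)
    (ξ : ℝ) (hξ : 0 < ξ) (hξ1 : ξ < 1) (n : ℕ) (hn : 1 ≤ n) :
    ENNReal.ofReal (1 - ξ) ≤
      (Measure.pi fun _ : Fin n => ν)
        {D : Fin n → X | ∀ θ ∈ S, 0 < w θ →
          risk p ν θ ≤ (B / (1 - Real.exp (-B))) *
            (empRisk p n D θ - (Real.log (w θ) + Real.log ξ) / n)} := by
  classical
  haveI : Countable ↥S := hS.to_subtype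
  haveI : IsProbabilityMeasure (Measure.pi fun _ : Fin n => ν) := by infer_instance
  have hn0 : (0:ℝ) < (n:ℝ) := by exact_mod_cast Nat.lt_of_lt_of_le Nat.zero_lt_one hn
  have hexpB1 : Real.exp (-B) < 1 := by rw [Real.exp_lt_one_iff]; linarith
  set c : ℝ := (1 - Real.exp (-B)) / B with hc
  have hc_pos : 0 < c := div_pos (by linarith) hB
  have hpθ : ∀ θ : Θ, Measurable fun x => p x θ := fun θ =>
    hp_meas.comp (measurable_id.prodMk measurable_const)
  have hℓmeas : ∀ θ : Θ, Measurable fun x => -Real.log (p x θ) := fun θ =>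
    (Real.measurable_log.comp (hpθ θ)).neg
  have hℓbd : ∀ θ : Θ, ∀ᵐ x ∂ν, 0 ≤ -Real.log (p x θ) ∧ -Real.log (p x θ) ≤ B := by
    intro θ
    filter_upwards [hbound θ] with x hx
    have hp0 : 0 < p x θ := lt_of_lt_of_le (Real.exp_pos _) hx.1
    constructor
    · have h := Real.log_nonpos hp0.le hx.2
      linarith
    · have h : -B ≤ Real.log (p x θ) := by
        have h2 := Real.log_le_log (Real.exp_pos (-B)) hx.1
        rwa [Real.log_exp] at h2
      linarith
  set A : ↥S → Set (Fin n → X) := fun θ =>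
    {D | 0 < w θ ∧ ¬ (risk p ν θ ≤ (B / (1 - Real.exp (-B))) *
        (empRisk p n D θ - (Real.log (w θ) + Real.log ξ) / n))} with hA
  have hAmeas : ∀ θ : ↥S, MeasurableSet (A θ) := by
    intro θ
    by_cases hw : 0 < w (θ:Θ)
    · have hrw : A θ = {D : Fin n → X | (B / (1 - Real.exp (-B))) *
          (empRisk p n D (θ:Θ) - (Real.log (w θ) + Real.log ξ) / n) < risk p ν θ} := by
        ext D; simp [hA, hw, not_le]
      rw [hrw]
      have hmeasE : Measurable fun D : Fin n → X => (B / (1 - Real.exp (-B))) *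
          (empRisk p n D (θ:Θ) - (Real.log (w θ) + Real.log ξ) / (n:ℝ)) := by
        apply Measurable.const_mul
        apply Measurable.sub _ measurable_const
        unfold empRisk
        exact (Finset.measurable_sum _ fun i _ =>
          ((hℓmeas θ).comp (measurable_pi_apply i))).const_mul _
      exact measurableSet_lt hmeasE measurable_const
    · have hrw : A θ = ∅ := by ext D; simp [hA, hw]
      rw [hrw]; exact MeasurableSet.empty
  have hAbound : ∀ θ : ↥S, (Measure.pi fun _ : Fin n => ν) (A θ)
      ≤ ENNReal.ofReal (w θ * ξ) := by
    intro θ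
    by_cases hw : 0 < w (θ:Θ)
    · have hsub : A θ ⊆ {D : Fin n → X |
          ∑ i : Fin n, (fun x => -Real.log (p x (θ:Θ))) (D i) <
          ((1 - Real.exp (-B)) / B) * ((n:ℝ) * ∫ x, (fun x => -Real.log (p x (θ:Θ))) x ∂ν) +
          (Real.log (w θ) + Real.log ξ)} := by
        intro D hD
        obtain ⟨-, hD2⟩ := hD
        simp only [Set.mem_setOf_eq]
        rw [not_le] at hD2
        have hcinv : B / (1 - Real.exp (-B)) = 1 / c := one_div_div _ _ |>.symm
        rw [hcinv, one_div_mul_eq_div, div_lt_iff₀ hc_pos] at hD2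
        have h2 := mul_lt_mul_of_pos_left hD2 hn0
        have hemp : (n:ℝ) * empRisk p n D (θ:Θ) =
            ∑ i : Fin n, -Real.log (p (D i) (θ:Θ)) := by
          unfold empRisk; field_simp
        have h3 : (n:ℝ) * ((Real.log (w θ) + Real.log ξ)/(n:ℝ))
            = Real.log (w θ) + Real.log ξ := by field_simp
        have hrisk : risk p ν (θ:Θ) = ∫ x, -Real.log (p x (θ:Θ)) ∂ν := rfl
        rw [mul_sub] at h2
        rw [hemp, h3, hrisk] at h2
        rw [← hc]
        linarith [h2]
      calc (Measure.pi fun _ : Fin n => ν) (A θ)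
          ≤ (Measure.pi fun _ : Fin n => ν) _ := measure_mono hsub
        _ ≤ ENNReal.ofReal (Real.exp (Real.log (w θ) + Real.log ξ)) :=
            chernoff_aux ν _ (hℓmeas θ) B hB (hℓbd θ) n _
        _ = ENNReal.ofReal (w θ * ξ) := by
            rw [Real.exp_add, Real.exp_log hw, Real.exp_log hξ]
    · have hrw : A θ = ∅ := by ext D; simp [hA, hw]
      rw [hrw]
      simp
  have hsummable : Summable fun θ : ↥S => w θ := by
    by_contra h
    rw [tsum_eq_zero_of_not_summable h] at hw_sum
    norm_num at hw_sum
  have hUmeas : MeasurableSet (⋃ θ : ↥S, A θ) := MeasurableSet.iUnion fun θ => hAmeas θ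
  have hUbound : (Measure.pi fun _ : Fin n => ν) (⋃ θ : ↥S, A θ) ≤ ENNReal.ofReal ξ := by
    calc (Measure.pi fun _ : Fin n => ν) (⋃ θ : ↥S, A θ)
        ≤ ∑' θ : ↥S, (Measure.pi fun _ : Fin n => ν) (A θ) := measure_iUnion_le _
      _ ≤ ∑' θ : ↥S, ENNReal.ofReal (w θ * ξ) := ENNReal.tsum_le_tsum hAbound
      _ = ENNReal.ofReal (∑' θ : ↥S, w θ * ξ) :=
          (ENNReal.ofReal_tsum_of_nonneg (f := fun θ : ↥S => w θ * ξ)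
            (fun θ => mul_nonneg (hw_nonneg θ.1 θ.2) hξ.le) (hsummable.mul_right ξ)).symm
      _ = ENNReal.ofReal ξ := by rw [tsum_mul_right, hw_sum, one_mul]
  have hGc : {D : Fin n → X | ∀ θ ∈ S, 0 < w θ →
      risk p ν θ ≤ (B / (1 - Real.exp (-B))) *
        (empRisk p n D θ - (Real.log (w θ) + Real.log ξ) / n)}
      = (⋃ θ : ↥S, A θ)ᶜ := by
    ext D
    simp only [Set.mem_setOf_eq, Set.mem_compl_iff, Set.mem_iUnion, not_exists, hA,
      Set.mem_setOf_eq, not_and, not_not]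
    constructor
    · intro h θ hw; exact h θ θ.2 hw
    · intro h θ hθ hw; exact h ⟨θ, hθ⟩ hw
  rw [hGc, measure_compl hUmeas (measure_ne_top _ _), measure_univ]
  have hofreal : ENNReal.ofReal (1 - ξ) = 1 - ENNReal.ofReal ξ := by
    rw [ENNReal.ofReal_sub _ hξ.le, ENNReal.ofReal_one]
  rw [hofreal]
  exact tsub_le_tsub_left hUbound _

end
end

section
/- Second-order PAC-Bayes bound for ensembles: Let S ⊆ Θ be countable and π_F = Σ_{θ′ ∈ S} w_{θ′} δ_{θ′} a discrete prior with weights w_{θ′} ≥ 0 summing to 1. Fix ξ ∈ (0,1), n ≥ 1, E ≥ 1, and set A = (1/2)((B+1)/(1 − e^{−B−1}) − 1). For parameters θ_1, …, θ_E ∈ S with w_{θ_j} > 0, let ρ_E = (1/E) Σ_{j=1}^E δ_{θ_j} and p_E(x) = (1/E) Σ_{j=1}^E p(x|θ_j). Then, with ν^n-probability at least 1 − ξ over the draw of an i.i.d. sample D = (x_1, …, x_n) from ν, simultaneously for all such tuples (θ_1, …, θ_E): L̄(ρ_E) ≤ ((B+1)/(1 − e^{−B−1})) · ( (1/E) Σ_{j=1}^E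 L̂(D, θ_j) − V̂_E(D, θ_1, …, θ_E) − ( (1/E) Σ_{j=1}^E ln w_{θ_j} + ln ξ )/n ) + A, where V̂_E(D, θ_1, …, θ_E) = (1/(nE)) Σ_{i=1}^n Σ_{j=1}^E (p(x_i|θ_j) − p_E(x_i))² / (2 (max_{1≤k≤E} p(x_i|θ_k))²). -/
open MeasureTheory Real
open scoped ENNReal

noncomputable section

section AuxLemmas
open intervalIntegral


/-- chord bound for exp on [0,1] -/
lemma aux_exp_chord {t : ℝ} (h0 : 0 ≤ t) (h1 : t ≤ 1) :
    Real.exp (-t) ≤ 1 - (1 - Real.exp (-1)) * t := by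
  have h := convexOn_exp.2 (Set.mem_univ (-1 : ℝ)) (Set.mem_univ (0 : ℝ)) h0
    (by linarith : (0:ℝ) ≤ 1 - t) (by ring)
  simp only [smul_eq_mul, mul_neg, mul_one, mul_zero, add_zero, Real.exp_zero] at h
  calc Real.exp (-t) = Real.exp (t * -1 + (1 - t) * 0) := by ring_nf
    _ ≤ t * Real.exp (-1) + (1 - t) * 1 := by
        have := convexOn_exp.2 (Set.mem_univ (-1 : ℝ)) (Set.mem_univ (0 : ℝ)) h0
          (by linarith : (0:ℝ) ≤ 1 - t) (by ring)
        simpa [smul_eq_mul, Real.exp_zero] using this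
    _ = 1 - (1 - Real.exp (-1)) * t := by ring

/-- tangent bound for log -/
lemma aux_log_tangent {x c : ℝ} (hx : 0 < x) (hc : 0 < c) :
    Real.log x ≤ Real.log c + (x - c) / c := by
  have h := Real.log_le_sub_one_of_pos (div_pos hx hc)
  rw [Real.log_div hx.ne' hc.ne'] at h
  have : x / c - 1 = (x - c) / c := by field_simp
  linarith [this ▸ h]

/-- mgf-type bound -/
lemma aux_mgf {m : ℝ} (h0 : 0 ≤ m) (h1 : m ≤ 1) :
    Real.exp m * (1 - (1 - Real.exp (-1)) * m) ≤
      Real.exp (1 / (1 - Real.exp (-1)) - 1 + Real.log (1 - Real.exp (-1))) := by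
  set k : ℝ := 1 - Real.exp (-1) with hk
  have hexp1 : Real.exp (-1) < 1 := Real.exp_lt_one_iff.2 (by norm_num)
  have hexp0 : 0 < Real.exp (-1) := Real.exp_pos _
  have hk0 : 0 < k := by rw [hk]; linarith
  have hk1 : k < 1 := by rw [hk]; linarith
  have hpos : 0 < 1 - k * m := by nlinarith
  have hlog : Real.log (1 - k * m) ≤ Real.log k + (1 - k * m - k) / k :=
    aux_log_tangent hpos hk0
  have key : m + Real.log (1 - k * m) ≤ 1 / k - 1 + Real.log k := by
    have : (1 - k * m - k) / k = 1 / k - m - 1 := by field_simp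
    rw [this] at hlog; linarith
  calc Real.exp m * (1 - k * m) = Real.exp (m + Real.log (1 - k * m)) := by
        rw [Real.exp_add, Real.exp_log hpos]
    _ ≤ Real.exp (1 / k - 1 + Real.log k) := Real.exp_le_exp.2 key


/-- numeric bound: ψ* ≤ (1-k)/2 -/
lemma aux_numeric :
    1 / (1 - Real.exp (-1)) - 1 + Real.log (1 - Real.exp (-1)) ≤ Real.exp (-1) / 2 := by
  set t : ℝ := Real.exp (-1) with ht
  have he_gt : (2.7182818283 : ℝ) < Real.exp 1 := Real.exp_one_gt_d9
  have he_lt : Real.exp 1 < 2.7182818286 := Real.exp_one_lt_d9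
  have htinv : t = (Real.exp 1)⁻¹ := by rw [ht, Real.exp_neg]
  have hepos : (0:ℝ) < Real.exp 1 := Real.exp_pos _
  have ht_lb : 0.36787944 < t := by
    rw [htinv]
    rw [lt_inv_comm₀ (by norm_num) hepos]
    calc Real.exp 1 < 2.7182818286 := he_lt
      _ < 0.36787944⁻¹ := by norm_num
  have ht_ub : t < 0.36787945 := by
    rw [htinv]
    rw [inv_lt_comm₀ hepos (by norm_num)]
    calc (0.36787945:ℝ)⁻¹ < 2.7182818283 := by norm_num
      _ < Real.exp 1 := he_gt
  have hk0 : (0:ℝ) < 1 - t := by linarith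
  -- log (1 - t) ≤ -2/5
  have hlog : Real.log (1 - t) ≤ -(2/5 : ℝ) := by
    rw [Real.log_le_iff_le_exp hk0]
    -- 1 - t ≤ exp (-2/5)  ⟺  (1-t) * exp(2/5) ≤ 1... use e - 1 ≤ exp(3/5)
    have h15 : (1.2 : ℝ) ≤ Real.exp (1/5) := by
      have := Real.add_one_le_exp (1/5 : ℝ); linarith
    have h35 : (1.728 : ℝ) ≤ Real.exp (3/5) := by
      have : Real.exp (3/5 : ℝ) = Real.exp (1/5) ^ (3:ℕ) := by
        rw [← Real.exp_nat_mul]; norm_num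
      rw [this]
      calc (1.728 : ℝ) = 1.2^(3:ℕ) := by norm_num
        _ ≤ Real.exp (1/5) ^ (3:ℕ) := by
            apply pow_le_pow_left₀ (by norm_num) h15
    -- 1 - t ≤ exp(-2/5) ⇔ (1 - t) * exp 1 ≤ exp(3/5)
    have key : (1 - t) * Real.exp 1 ≤ Real.exp (3/5) := by
      have : (1 - t) * Real.exp 1 = Real.exp 1 - 1 := by
        rw [htinv]; field_simp
      rw [this]; linarith
    have hexp25 : Real.exp (-(2/5) : ℝ) = Real.exp (3/5) / Real.exp 1 := by
      rw [← Real.exp_sub]; norm_num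
    rw [hexp25, le_div_iff₀ hepos]; linarith
  -- remaining: 1/(1-t) - 1 - 2/5 ≤ t/2
  have hfin : 1 / (1 - t) - 1 - 2/5 ≤ t / 2 := by
    have h1 : 1 / (1 - t) ≤ 1 + 2/5 + t/2 := by
      rw [div_le_iff₀ hk0]; nlinarith
    linarith
  calc 1 / (1 - t) - 1 + Real.log (1 - t) ≤ 1 / (1 - t) - 1 - 2/5 := by linarith
    _ ≤ t / 2 := hfin


/-- monotonicity: C(B) ≥ 1/(1-e⁻¹) for B > 0 -/
lemma aux_C_ge {B : ℝ} (hB : 0 < B) :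
    1 / (1 - Real.exp (-1)) ≤ (B + 1) / (1 - Real.exp (-B - 1)) := by
  set x : ℝ := B + 1 with hx
  have hx1 : 1 ≤ x := by rw [hx]; linarith
  have he1lt : Real.exp (-1) < 1 := Real.exp_lt_one_iff.2 (by norm_num)
  have he1pos : (0:ℝ) < Real.exp (-1) := Real.exp_pos _
  have hehalf : Real.exp (-1) < 1/2 := by
    have h2 : (2:ℝ) < Real.exp 1 := by
      have := Real.exp_one_gt_d9; linarith
    rw [Real.exp_neg, inv_lt_comm₀ (Real.exp_pos 1) (by norm_num)]
    norm_num; linarith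
  have hexlt : Real.exp (-B - 1) < 1 := Real.exp_lt_one_iff.2 (by linarith)
  have hden : (0:ℝ) < 1 - Real.exp (-B - 1) := by linarith
  have hkden : (0:ℝ) < 1 - Real.exp (-1) := by linarith
  -- tangent: exp(-1)*(2 - x) ≤ exp(-x)
  have htang : Real.exp (-1) * (2 - x) ≤ Real.exp (-x) := by
    have h := Real.add_one_le_exp (1 - x)
    have : Real.exp (-x) = Real.exp (-1) * Real.exp (1 - x) := by
      rw [← Real.exp_add]; ring_nf
    rw [this]
    nlinarith [Real.exp_pos (1 - x)]
  -- 1 - exp(-x) ≤ x * (1 - exp(-1))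
  have hkey : 1 - Real.exp (-x) ≤ x * (1 - Real.exp (-1)) := by
    nlinarith
  have hxeq : -B - 1 = -x := by rw [hx]; ring
  rw [hxeq]
  rw [div_le_div_iff₀ hkden (by rw [← hxeq]; exact hden)]
  nlinarith

/-- chord bound: -log q ≤ C (1 - q) for q ∈ [exp(-B-1), 1] -/
lemma aux_log_chord {B q : ℝ} (hB : 0 < B) (hq1 : Real.exp (-B - 1) ≤ q) (hq2 : q ≤ 1) :
    -Real.log q ≤ (B + 1) / (1 - Real.exp (-B - 1)) * (1 - q) := by
  have hexlt : Real.exp (-B - 1) < 1 := Real.exp_lt_one_iff.2 (by linarith)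
  have hden : (0:ℝ) < 1 - Real.exp (-B - 1) := by linarith
  set a : ℝ := Real.exp (-B - 1) with ha
  set s : ℝ := (1 - q) / (1 - a) with hs
  have hs0 : 0 ≤ s := div_nonneg (by linarith) (by linarith)
  have hs1 : s ≤ 1 := by
    rw [hs, div_le_one hden]; linarith
  have hcomb : s * a + (1 - s) = q := by
    have : s * (1 - a) = 1 - q := by
      rw [hs]; field_simp
    nlinarith
  have hconc := strictConcaveOn_log_Ioi.concaveOn.2
    (Set.mem_Ioi.2 (Real.exp_pos _) : a ∈ Set.Ioi (0:ℝ))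
    (Set.mem_Ioi.2 one_pos) hs0 (show (0:ℝ) ≤ 1 - s by linarith)
    (show s + (1 - s) = 1 by ring)
  simp only [smul_eq_mul, Real.log_one, mul_zero, add_zero, mul_one] at hconc
  rw [hcomb] at hconc
  have hloga : Real.log a = -B - 1 := by rw [ha, Real.log_exp]
  rw [hloga] at hconc
  have : -Real.log q ≤ s * (B + 1) := by linarith
  calc -Real.log q ≤ s * (B + 1) := this
    _ = (B + 1) / (1 - a) * (1 - q) := by rw [hs]; field_simp


lemma aux_poly_integral (y x M : ℝ) (hM : M ≠ 0) :
    ∫ t in y..x, (1 / y - (t - y) / M ^ 2) =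
      (x - y) / y - (x - y) ^ 2 / (2 * M ^ 2) := by
  have h1 : IntervalIntegrable (fun _ : ℝ => 1 / y) volume y x := intervalIntegrable_const
  have h2 : IntervalIntegrable (fun t : ℝ => (t - y) / M ^ 2) volume y x := by
    apply ContinuousOn.intervalIntegrable
    exact ((continuousOn_id.sub continuousOn_const).div_const _)
  rw [intervalIntegral.integral_sub h1 h2]
  have ha : ∫ t in y..x, (1 / y : ℝ) = (x - y) * (1 / y) := by
    simp [smul_eq_mul]
  have hb : ∫ t in y..x, (t - y) / M ^ 2 = ((x ^ 2 - y ^ 2) / 2 - (x - y) * y) / M ^ 2 := by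
    have h3 : ∫ t in y..x, (t - y) / M ^ 2 = (∫ t in y..x, (t - y)) / M ^ 2 :=
      integral_div _ _
    have h4 : IntervalIntegrable (fun t : ℝ => t) volume y x := by
      apply ContinuousOn.intervalIntegrable; exact continuousOn_id
    rw [h3, intervalIntegral.integral_sub h4 intervalIntegrable_const, integral_id]
    simp [smul_eq_mul]
  rw [ha, hb]
  field_simp
  ring

/-- second-order log inequality -/
lemma aux_log_so {x y M : ℝ} (hx : 0 < x) (hy : 0 < y) (hxM : x ≤ M) (hyM : y ≤ M) :
    Real.log x - Real.log y ≤ (x - y) / y - (x - y) ^ 2 / (2 * M ^ 2) := by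
  have hM : 0 < M := lt_of_lt_of_le hx hxM
  have hlog : Real.log x - Real.log y = ∫ t in y..x, 1 / t := by
    rw [integral_one_div, Real.log_div hx.ne' hy.ne']
    intro h
    rcases Set.mem_uIcc.1 h with ⟨h1, _⟩ | ⟨_, h2⟩ <;> linarith
  rw [hlog, ← aux_poly_integral y x M hM.ne']
  rcases le_total y x with hxy | hxy
  · apply intervalIntegral.integral_mono_on hxy
    · apply ContinuousOn.intervalIntegrable
      apply ContinuousOn.div continuousOn_const continuousOn_id
      intro t ht
      rw [Set.uIcc_of_le hxy] at ht
      exact (lt_of_lt_of_le hy ht.1).ne'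
    · apply ContinuousOn.intervalIntegrable
      exact continuousOn_const.sub (((continuousOn_id.sub continuousOn_const).div_const _))
    · intro t ht
      have hty : y ≤ t := ht.1
      have htM : t ≤ M := le_trans ht.2 hxM
      have ht0 : 0 < t := lt_of_lt_of_le hy hty
      rw [div_sub_div _ _ hy.ne' (by positivity : (M^2 : ℝ) ≠ 0),
        div_le_div_iff₀ ht0 (by positivity)]
      have hty2 : t * y ≤ M ^ 2 := by nlinarith
      have hprod : 0 ≤ (t - y) * (M ^ 2 - t * y) := mul_nonneg (by linarith) (by linarith)
      nlinarith
  · rw [integral_symm x y, integral_symm x y, neg_le_neg_iff]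
    apply intervalIntegral.integral_mono_on hxy
    · apply ContinuousOn.intervalIntegrable
      exact continuousOn_const.sub (((continuousOn_id.sub continuousOn_const).div_const _))
    · apply ContinuousOn.intervalIntegrable
      apply ContinuousOn.div continuousOn_const continuousOn_id
      intro t ht
      rw [Set.uIcc_of_le hxy] at ht
      exact (lt_of_lt_of_le hx ht.1).ne'
    · intro t ht
      have htx : x ≤ t := ht.1
      have hty : t ≤ y := ht.2
      have htM : t ≤ M := le_trans ht.2 hyM
      have ht0 : 0 < t := lt_of_lt_of_le hx htx
      rw [div_sub_div _ _ hy.ne' (by positivity : (M^2 : ℝ) ≠ 0),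
        div_le_div_iff₀ (by positivity) ht0]
      have hty2 : t * y ≤ M ^ 2 := by nlinarith
      have hprod : (t - y) * (M ^ 2 - t * y) ≤ 0 :=
        mul_nonpos_of_nonpos_of_nonneg (by linarith) (by linarith)
      nlinarith



/-- ensemble second-order inequality at one point -/
lemma aux_ensemble_so {E : ℕ} (hE : 1 ≤ E) (a : Fin E → ℝ) (ha : ∀ j, 0 < a j) :
    -Real.log ((1 / (E : ℝ)) * ∑ j, a j) ≤
      (1 / (E : ℝ)) * ∑ j, (-Real.log (a j)) -
      (1 / (E : ℝ)) * ∑ j, (a j - (1 / (E : ℝ)) * ∑ j', a j') ^ 2 /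
        (2 * (⨆ k, a k) ^ 2) := by
  haveI : Nonempty (Fin E) := Fin.pos_iff_nonempty.1 hE
  have hEpos : (0:ℝ) < E := by exact_mod_cast hE
  set M : ℝ := ⨆ k, a k with hM
  have hbdd : BddAbove (Set.range a) := Set.Finite.bddAbove (Set.finite_range a)
  have haM : ∀ j, a j ≤ M := fun j => le_ciSup hbdd j
  have hM0 : 0 < M := lt_of_lt_of_le (ha (Classical.arbitrary _)) (haM _)
  set abar : ℝ := (1 / (E : ℝ)) * ∑ j, a j with habar
  have habar0 : 0 < abar := by
    apply mul_pos (by positivity)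
    exact Finset.sum_pos (fun j _ => ha j) Finset.univ_nonempty
  have habarM : abar ≤ M := by
    rw [habar]
    have : ∑ j, a j ≤ E * M := by
      calc ∑ j, a j ≤ ∑ _j : Fin E, M := Finset.sum_le_sum (fun j _ => haM j)
        _ = E * M := by simp [Finset.sum_const, nsmul_eq_mul]
    have h5 : (1 / (E:ℝ)) * ((E:ℝ) * M) = M := by field_simp
    have h6 := mul_le_mul_of_nonneg_left this (show (0:ℝ) ≤ 1 / (E:ℝ) by positivity)
    linarith

  -- sum the pointwise second-order inequalities
  have hsum : ∑ j, (Real.log (a j) - Real.log abar) ≤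
      ∑ j, ((a j - abar) / abar) - ∑ j, (a j - abar) ^ 2 / (2 * M ^ 2) := by
    rw [← Finset.sum_sub_distrib]
    apply Finset.sum_le_sum
    intro j _
    exact aux_log_so (ha j) habar0 (haM j) habarM
  have hzero : ∑ j, ((a j - abar) / abar) = 0 := by
    rw [← Finset.sum_div]
    have : ∑ j, (a j - abar) = 0 := by
      rw [Finset.sum_sub_distrib]
      simp [habar, Finset.sum_const, nsmul_eq_mul]
      field_simp
      ring
    rw [this, zero_div]
  have hsum2 : ∑ j, Real.log (a j) - E * Real.log abar ≤
      - ∑ j, (a j - abar) ^ 2 / (2 * M ^ 2) := by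
    have h1 : ∑ j, (Real.log (a j) - Real.log abar) =
        ∑ j, Real.log (a j) - E * Real.log abar := by
      rw [Finset.sum_sub_distrib]
      simp [Finset.sum_const, nsmul_eq_mul]
    rw [h1, hzero] at hsum
    linarith
  -- divide by E
  have key : -Real.log abar ≤ (1 / (E : ℝ)) * ∑ j, (-Real.log (a j)) -
      (1 / (E : ℝ)) * ∑ j, (a j - abar) ^ 2 / (2 * M ^ 2) := by
    have h2 : (1 / (E : ℝ)) * (∑ j, Real.log (a j) - E * Real.log abar) ≤
        (1 / (E : ℝ)) * (- ∑ j, (a j - abar) ^ 2 / (2 * M ^ 2)) :=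
      mul_le_mul_of_nonneg_left hsum2 (by positivity)
    have h3 : (1 / (E : ℝ)) * (E : ℝ) = 1 := by field_simp
    have h4 : ∑ j, (-Real.log (a j)) = - ∑ j, Real.log (a j) := by
      simp [Finset.sum_neg_distrib]
    have h6 : (1 / (E:ℝ)) * (∑ j, Real.log (a j) - (E:ℝ) * Real.log abar) =
        (1 / (E:ℝ)) * ∑ j, Real.log (a j) - Real.log abar := by
      rw [mul_sub, ← mul_assoc, h3, one_mul]
    rw [h4, mul_neg]
    rw [h6] at h2
    rw [mul_neg] at h2
    linarith
  simpa [habar] using key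


/-- The ensemble predictive density `p_E(x) = (1/E) Σ_j p(x|θ_j)`: this is the
predictive density of the uniform mixture of Diracs `ρ_E = (1/E) Σ_j δ_{θ_j}`. -/
def ensemblePredictive {X Θ : Type*} (p : X → Θ → ℝ) (E : ℕ)
    (θs : Fin E → Θ) (x : X) : ℝ :=
  (1 / (E : ℝ)) * ∑ j : Fin E, p x (θs j)

/-- Expected code length of the ensemble: `L̄(ρ_E) = ∫ −ln p_E(x) dν(x)`. -/
def ensembleCodeLength {X Θ : Type*} [MeasurableSpace X] (p : X → Θ → ℝ)
    (ν : Measure X) (E : ℕ) (θs : Fin E → Θ) : ℝ :=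
  ∫ x, -Real.log (ensemblePredictive p E θs x) ∂ν

/-- The empirical variance (diversity) term of the ensemble:
`V̂_E(D,θ_1,…,θ_E) = (1/(nE)) Σ_i Σ_j (p(x_i|θ_j) − p_E(x_i))² / (2 (max_k p(x_i|θ_k))²)`. -/
def ensembleEmpVariance {X Θ : Type*} (p : X → Θ → ℝ) (n : ℕ) (D : Fin n → X)
    (E : ℕ) (θs : Fin E → Θ) : ℝ :=
  (1 / ((n : ℝ) * E)) * ∑ i : Fin n, ∑ j : Fin E,
    (p (D i) (θs j) - ensemblePredictive p E θs (D i)) ^ 2 /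
      (2 * (⨆ k : Fin E, p (D i) (θs k)) ^ 2)


lemma aux_pop {X Θ : Type*} [MeasurableSpace X] (ν : Measure X) [IsProbabilityMeasure ν]
    (p : X → Θ → ℝ) (B : ℝ) (hB : 0 < B) (E : ℕ) (hE : 1 ≤ E) (θs : Fin E → Θ)
    (pmeas : ∀ j : Fin E, Measurable fun x => p x (θs j))
    (int_p : ∀ j : Fin E, Integrable (fun x => p x (θs j)) ν)
    (int_g : ∀ j : Fin E, Integrable (fun x => 1 - p x (θs j)) ν)
    (hbound : ∀ j : Fin E, ∀ᵐ x ∂ν, Real.exp (-B) ≤ p x (θs j) ∧ p x (θs j) ≤ 1)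
    (hpE_bounds : ∀ x : X,
      (∀ j : Fin E, Real.exp (-B) ≤ p x (θs j) ∧ p x (θs j) ≤ 1) →
      Real.exp (-B) ≤ ensemblePredictive p E θs x ∧ ensemblePredictive p E θs x ≤ 1) :
    ensembleCodeLength p ν E θs ≤ (B + 1) / (1 - Real.exp (-B - 1)) *
      ((1/(E:ℝ)) * ∑ j, ∫ x, (1 - p x (θs j)) ∂ν) := by
  have hER : (0:ℝ) < E := by exact_mod_cast hE
  have hae_tuple : ∀ᵐ x ∂ν, ∀ j : Fin E,
      Real.exp (-B) ≤ p x (θs j) ∧ p x (θs j) ≤ 1 := ae_all_iff.2 hbound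
  have pE_meas : Measurable (ensemblePredictive p E θs) := by
    unfold ensemblePredictive
    exact measurable_const.mul (Finset.measurable_sum _ fun j _ => pmeas j)
  have int_pE : Integrable (fun x => ensemblePredictive p E θs x) ν := by
    unfold ensemblePredictive
    exact (integrable_finset_sum _ fun j _ => int_p j).const_mul _
  have hstrong : AEStronglyMeasurable (fun x => -Real.log (ensemblePredictive p E θs x)) ν := by
    exact ((Real.measurable_log.comp pE_meas).neg).aestronglyMeasurable
  have int_negLog : Integrable (fun x => -Real.log (ensemblePredictive p E θs x)) ν := by
    apply Integrable.mono' (integrable_const B) hstrong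
    filter_upwards [hae_tuple] with x hx
    obtain ⟨hl, hu⟩ := hpE_bounds x hx
    have hpos : 0 < ensemblePredictive p E θs x := lt_of_lt_of_le (Real.exp_pos _) hl
    rw [Real.norm_eq_abs, abs_le]
    constructor
    · have := Real.log_nonpos hpos.le hu
      linarith
    · have h1 : Real.log (Real.exp (-B)) ≤ Real.log (ensemblePredictive p E θs x) :=
        Real.log_le_log (Real.exp_pos _) hl
      rw [Real.log_exp] at h1
      linarith
  set C : ℝ := (B + 1) / (1 - Real.exp (-B - 1)) with hC_def
  have int_CpE : Integrable (fun x => C * (1 - ensemblePredictive p E θs x)) ν :=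
    ((integrable_const (1:ℝ)).sub int_pE).const_mul C
  have h1 : ensembleCodeLength p ν E θs ≤
      ∫ x, C * (1 - ensemblePredictive p E θs x) ∂ν := by
    unfold ensembleCodeLength
    apply integral_mono_ae int_negLog int_CpE
    filter_upwards [hae_tuple] with x hx
    obtain ⟨hl, hu⟩ := hpE_bounds x hx
    have hBl : Real.exp (-B - 1) ≤ ensemblePredictive p E θs x :=
      le_trans (Real.exp_le_exp.2 (by linarith)) hl
    exact aux_log_chord hB hBl hu
  have h2 : ∫ x, C * (1 - ensemblePredictive p E θs x) ∂ν =
      C * ((1/(E:ℝ)) * ∑ j, ∫ x, (1 - p x (θs j)) ∂ν) := by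
    rw [MeasureTheory.integral_const_mul]
    congr 1
    have hfun : (fun x => 1 - ensemblePredictive p E θs x) =
        (fun x => ∑ j, (1/(E:ℝ)) * (1 - p x (θs j))) := by
      funext x
      unfold ensemblePredictive
      rw [← Finset.mul_sum, Finset.sum_sub_distrib, Finset.sum_const, Finset.card_univ,
        Fintype.card_fin, nsmul_eq_mul, mul_one]
      field_simp
    rw [show (∫ x, (1 - ensemblePredictive p E θs x) ∂ν) =
        ∫ x, ∑ j, (1/(E:ℝ)) * (1 - p x (θs j)) ∂ν from by rw [hfun]]
    rw [integral_finset_sum _ (fun j _ => ((int_g j).const_mul _))]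
    rw [Finset.mul_sum]
    apply Finset.sum_congr rfl
    intro j _
    rw [MeasureTheory.integral_const_mul]
  linarith [h1, h2.le, h2.ge]

lemma aux_combine {C ψ A nn EE SM SL SW V lξ L : ℝ} (hC : 0 < C) (hCψA : C * ψ ≤ A)
    (hn : 0 < nn) (hE : 0 < EE)
    (hkey : nn * SM ≤ nn * SL - nn * EE * V + nn * EE * ψ - SW - EE * lξ)
    (hpop : L ≤ C * ((1/EE) * SM)) :
    L ≤ C * ((1/EE) * SL - V - ((1/EE) * SW + lξ) / nn) + A := by
  have hb : (1/EE) * SM ≤ ((1/EE) * SL - V - ((1/EE) * SW + lξ) / nn) + ψ := by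
    have h2 := mul_le_mul_of_nonneg_left hkey
      (le_of_lt (show (0:ℝ) < 1/(nn*EE) by positivity))
    have e1 : 1/(nn*EE) * (nn * SM) = (1/EE) * SM := by field_simp
    have e2 : 1/(nn*EE) * (nn * SL - nn * EE * V + nn * EE * ψ - SW - EE * lξ) =
        (1/EE) * SL - V + ψ - SW/(nn*EE) - lξ/nn := by field_simp
    have e3 : ((1/EE) * SW + lξ) / nn = SW/(nn*EE) + lξ/nn := by field_simp
    rw [e1, e2] at h2
    rw [e3]
    linarith
  have h3 := mul_le_mul_of_nonneg_left hb hC.le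
  rw [mul_add] at h3
  linarith

lemma aux_emp {X Θ : Type*} (p : X → Θ → ℝ) (n E : ℕ) (hn : 1 ≤ n) (hE : 1 ≤ E)
    (D : Fin n → X) (θs : Fin E → Θ)
    (hpos : ∀ i j, 0 < p (D i) (θs j)) (hle : ∀ i j, p (D i) (θs j) ≤ 1) :
    ∑ j, ∑ i, (1 - p (D i) (θs j)) ≤
      (n:ℝ) * ∑ j, empRisk p n D (θs j) -
      (n:ℝ) * (E:ℝ) * ensembleEmpVariance p n D E θs := by
  haveI : Nonempty (Fin E) := Fin.pos_iff_nonempty.1 hE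
  have hnR : (0:ℝ) < n := by exact_mod_cast hn
  have hER : (0:ℝ) < E := by exact_mod_cast hE
  have hper : ∀ i : Fin n, ∑ j, (1 - p (D i) (θs j)) ≤
      (∑ j, (-Real.log (p (D i) (θs j)))) -
      ∑ j, (p (D i) (θs j) - (1/(E:ℝ)) * ∑ j', p (D i) (θs j')) ^ 2 /
        (2 * (⨆ k, p (D i) (θs k)) ^ 2) := by
    intro i
    have hso := aux_ensemble_so hE (fun j => p (D i) (θs j)) (hpos i)
    simp only at hso
    set s : ℝ := ∑ j, p (D i) (θs j) with hs_def
    have hspos : 0 < s := Finset.sum_pos (fun j _ => hpos i j) Finset.univ_nonempty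
    have h1mp : 1 - (1/(E:ℝ)) * s ≤ -Real.log ((1/(E:ℝ)) * s) := by
      have := Real.log_le_sub_one_of_pos (show (0:ℝ) < (1/(E:ℝ)) * s by positivity)
      linarith
    have hsum1 : ∑ j, (1 - p (D i) (θs j)) = (E:ℝ) * (1 - (1/(E:ℝ)) * s) := by
      rw [Finset.sum_sub_distrib, Finset.sum_const, Finset.card_univ, Fintype.card_fin,
        nsmul_eq_mul, mul_one, ← hs_def]
      field_simp
    have hsoE := mul_le_mul_of_nonneg_left hso (le_of_lt hER)
    have hid : ∀ z : ℝ, (E:ℝ) * ((1/(E:ℝ)) * z) = z := by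
      intro z; field_simp
    rw [mul_sub, hid, hid] at hsoE
    calc ∑ j, (1 - p (D i) (θs j)) = (E:ℝ) * (1 - (1/(E:ℝ)) * s) := hsum1
      _ ≤ (E:ℝ) * (-Real.log ((1/(E:ℝ)) * s)) :=
          mul_le_mul_of_nonneg_left h1mp (le_of_lt hER)
      _ ≤ _ := hsoE
  have hsum := Finset.sum_le_sum (fun i (_ : i ∈ (Finset.univ : Finset (Fin n))) => hper i)
  rw [Finset.sum_sub_distrib] at hsum
  rw [Finset.sum_comm (f := fun j i => (1 - p (D i) (θs j)))]
  have e1 : (n:ℝ) * ∑ j, empRisk p n D (θs j) =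
      ∑ i, ∑ j, (-Real.log (p (D i) (θs j))) := by
    unfold empRisk
    rw [Finset.mul_sum]
    have hjj : ∀ j : Fin E, (n:ℝ) * ((1/(n:ℝ)) * ∑ i, -Real.log (p (D i) (θs j))) =
        ∑ i, -Real.log (p (D i) (θs j)) := fun j => by
      rw [← mul_assoc, mul_one_div_cancel hnR.ne', one_mul]
    simp_rw [hjj]
    exact Finset.sum_comm
  have e2 : (n:ℝ) * (E:ℝ) * ensembleEmpVariance p n D E θs =
      ∑ i, ∑ j, (p (D i) (θs j) - (1/(E:ℝ)) * ∑ j', p (D i) (θs j')) ^ 2 /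
        (2 * (⨆ k, p (D i) (θs k)) ^ 2) := by
    unfold ensembleEmpVariance ensemblePredictive
    rw [← mul_assoc, mul_one_div_cancel (ne_of_gt (by positivity : (0:ℝ) < (n:ℝ)*(E:ℝ))),
      one_mul]
  linarith [hsum, e1, e2]

end AuxLemmas

set_option maxHeartbeats 1000000

/-- Second-order PAC-Bayes bound for ensembles under a countable
discrete prior `π_F = Σ_{θ'∈S} w_{θ'} δ_{θ'}`: with `ν^n`-probability at least
`1 − ξ` over an i.i.d. sample `D`, simultaneously for all tuples
`(θ_1, …, θ_E) ∈ S^E` with positive weights,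
`L̄(ρ_E) ≤ ((B+1)/(1−e^{−B−1})) ((1/E) Σ_j L̂(D,θ_j) − V̂_E(D,θ) − ((1/E) Σ_j ln w_{θ_j} + ln ξ)/n) + A`
with `A = (1/2)((B+1)/(1−e^{−B−1}) − 1)` (here `KL(ρ_E,π_F) = −(1/E) Σ_j ln w_{θ_j}`). -/
theorem second_order_pac_bayes_bound_ensembles
    {X : Type*} [MeasurableSpace X] (μ : Measure X) [SigmaFinite μ]
    (ν : Measure X) [IsProbabilityMeasure ν]
    {Θ : Type*} [MeasurableSpace Θ]
    (p : X → Θ → ℝ) (hp_meas : Measurable (Function.uncurry p))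
    (hp_dens : ∀ θ, IsProbabilityMeasure
      (μ.withDensity (fun x => ENNReal.ofReal (p x θ))))
    (B : ℝ) (hB : 0 < B)
    (hbound : ∀ θ, ∀ᵐ x ∂ν, Real.exp (-B) ≤ p x θ ∧ p x θ ≤ 1)
    (S : Set Θ) (hS : S.Countable)
    (w : Θ → ℝ) (hw_nonneg : ∀ θ ∈ S, 0 ≤ w θ)
    (hw_sum : ∑' θ : S, w θ = 1)
    (ξ : ℝ) (hξ : 0 < ξ) (hξ1 : ξ < 1) (n : ℕ) (hn : 1 ≤ n)
    (E : ℕ) (hE : 1 ≤ E)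
    (A : ℝ) (hA : A = (1 / 2) * ((B + 1) / (1 - Real.exp (-B - 1)) - 1)) :
    ENNReal.ofReal (1 - ξ) ≤
      (Measure.pi fun _ : Fin n => ν)
        {D : Fin n → X | ∀ θs : Fin E → Θ,
          (∀ j : Fin E, θs j ∈ S ∧ 0 < w (θs j)) →
          ensembleCodeLength p ν E θs ≤
            ((B + 1) / (1 - Real.exp (-B - 1))) *
              ((1 / (E : ℝ)) * ∑ j : Fin E, empRisk p n D (θs j)
                - ensembleEmpVariance p n D E θs
                - ((1 / (E : ℝ)) * (∑ j : Fin E, Real.log (w (θs j)))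
                    + Real.log ξ) / n) + A} := by
  classical
  haveI hSc : Countable S := hS.to_subtype
  have hnR : (0:ℝ) < n := by exact_mod_cast hn
  have hER : (0:ℝ) < E := by exact_mod_cast hE
  -- constants
  have hexp1 : Real.exp (-1:ℝ) < 1 := Real.exp_lt_one_iff.2 (by norm_num)
  set k : ℝ := 1 - Real.exp (-1) with hk_def
  have hk0 : 0 < k := by rw [hk_def]; linarith
  have hk1 : k < 1 := by rw [hk_def]; linarith [Real.exp_pos (-1:ℝ)]
  have hdenB : 0 < 1 - Real.exp (-B - 1) := by
    have : Real.exp (-B-1) < 1 := Real.exp_lt_one_iff.2 (by linarith)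
    linarith
  set C : ℝ := (B + 1) / (1 - Real.exp (-B - 1)) with hC_def
  have hCk : 1 / k ≤ C := aux_C_ge hB
  have h1k : 1 < 1 / k := by rw [lt_div_iff₀ hk0]; linarith
  have hC1 : 1 < C := lt_of_lt_of_le h1k hCk
  have hCpos : 0 < C := by linarith
  set ψ : ℝ := 1 / k - 1 + Real.log k with hψ_def
  have hCψA : C * ψ ≤ A := by
    have h1 : ψ ≤ (1 - k) / 2 := by
      have := aux_numeric
      rw [hψ_def, hk_def]; rw [hk_def] at *; linarith [aux_numeric]
    have h2 : 1 ≤ C * k := by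
      rw [div_le_iff₀ hk0] at hCk; linarith [hCk]
    have h3 : C * ψ ≤ C * ((1 - k) / 2) := mul_le_mul_of_nonneg_left h1 hCpos.le
    have h4 : C * ((1 - k) / 2) ≤ (C - 1) / 2 := by nlinarith
    rw [hA]; linarith
  -- measurability of sections
  have pmeas : ∀ θ, Measurable fun x => p x θ := fun θ =>
    hp_meas.comp (measurable_id.prodMk measurable_const)
  -- mean loss
  set m : Θ → ℝ := fun θ => ∫ x, (1 - p x θ) ∂ν with hm_def
  have int_p : ∀ θ, Integrable (fun x => p x θ) ν := by
    intro θ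
    apply Integrable.mono' (integrable_const (1:ℝ)) (pmeas θ).aestronglyMeasurable
    filter_upwards [hbound θ] with x hx
    rw [Real.norm_eq_abs, abs_le]
    constructor
    · linarith [Real.exp_pos (-B), hx.1]
    · exact hx.2
  have int_g : ∀ θ, Integrable (fun x => 1 - p x θ) ν := fun θ =>
    (integrable_const (1:ℝ)).sub (int_p θ)
  have hm0 : ∀ θ, 0 ≤ m θ := by
    intro θ
    apply integral_nonneg_of_ae
    filter_upwards [hbound θ] with x hx
    simp only [Pi.zero_apply]
    linarith [hx.2]
  have hm1 : ∀ θ, m θ ≤ 1 := by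
    intro θ
    have h := integral_mono_ae (int_g θ) (integrable_const (1:ℝ)) ?_
    · simpa using h
    · filter_upwards [hbound θ] with x hx
      have := Real.exp_pos (-B); linarith [hx.1]
  -- one-sample mgf bound
  have int_exp : ∀ θ, Integrable (fun x => Real.exp (m θ - ψ - (1 - p x θ))) ν := by
    intro θ
    apply Integrable.mono' (integrable_const (Real.exp (m θ - ψ)))
    · exact (Real.measurable_exp.comp
        ((measurable_const.sub ((measurable_const.sub (pmeas θ)))))).aestronglyMeasurable
    · filter_upwards [hbound θ] with x hx
      rw [Real.norm_eq_abs, abs_of_pos (Real.exp_pos _)]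
      apply Real.exp_le_exp.2
      have := Real.exp_pos (-B); nlinarith [hx.1, hx.2]
  have mgf : ∀ θ, ∫ x, Real.exp (m θ - ψ - (1 - p x θ)) ∂ν ≤ 1 := by
    intro θ
    have hsplit : ∀ x, Real.exp (m θ - ψ - (1 - p x θ)) =
        Real.exp (m θ - ψ) * Real.exp (-(1 - p x θ)) := by
      intro x; rw [← Real.exp_add]; ring_nf
    have h1 : ∫ x, Real.exp (m θ - ψ - (1 - p x θ)) ∂ν =
        Real.exp (m θ - ψ) * ∫ x, Real.exp (-(1 - p x θ)) ∂ν := by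
      simp_rw [hsplit]
      exact MeasureTheory.integral_const_mul _ _
    have int_e2 : Integrable (fun x => Real.exp (-(1 - p x θ))) ν := by
      have : ∀ x, Real.exp (-(1 - p x θ)) =
          Real.exp (-(m θ - ψ)) * Real.exp (m θ - ψ - (1 - p x θ)) := by
        intro x; rw [← Real.exp_add]; ring_nf
      simp_rw [this]
      exact (int_exp θ).const_mul _
    have int_rhs : Integrable (fun x => (1:ℝ) - k * (1 - p x θ)) ν :=
      (integrable_const (1:ℝ)).sub ((int_g θ).const_mul k)
    have h2 : ∫ x, Real.exp (-(1 - p x θ)) ∂ν ≤ 1 - k * m θ := by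
      have hmono := integral_mono_ae int_e2 int_rhs ?_
      · calc ∫ x, Real.exp (-(1 - p x θ)) ∂ν
            ≤ ∫ x, (1 - k * (1 - p x θ)) ∂ν := hmono
          _ = 1 - k * m θ := by
              rw [integral_sub (integrable_const _) ((int_g θ).const_mul k)]
              rw [MeasureTheory.integral_const_mul]
              simp [hm_def]
      · filter_upwards [hbound θ] with x hx
        have hg0 : 0 ≤ 1 - p x θ := by linarith [hx.2]
        have hg1 : 1 - p x θ ≤ 1 := by linarith [Real.exp_pos (-B), hx.1]
        rw [hk_def]
        exact aux_exp_chord hg0 hg1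
    have h3 : Real.exp (m θ) * (1 - k * m θ) ≤ Real.exp ψ := by
      rw [hψ_def, hk_def]
      rw [hk_def] at *
      exact aux_mgf (hm0 θ) (hm1 θ)
    rw [h1]
    have hkm : 0 < 1 - k * m θ := by nlinarith [hm0 θ, hm1 θ]
    have h4 : Real.exp (m θ - ψ) * (1 - k * m θ) ≤ 1 := by
      rw [Real.exp_sub, div_mul_eq_mul_div, div_le_one (Real.exp_pos _)]
      exact h3
    calc Real.exp (m θ - ψ) * ∫ x, Real.exp (-(1 - p x θ)) ∂ν
        ≤ Real.exp (m θ - ψ) * (1 - k * m θ) :=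
          mul_le_mul_of_nonneg_left h2 (Real.exp_pos _).le
      _ ≤ 1 := h4

  -- product space setup
  letI : MeasureSpace X := ⟨ν⟩
  haveI hsf : SigmaFinite (volume : Measure X) := inferInstanceAs (SigmaFinite ν)
  set μn : Measure (Fin n → X) := Measure.pi fun _ : Fin n => ν with hμn
  haveI : IsProbabilityMeasure μn := by
    rw [hμn]; infer_instance
  have hvol : (volume : Measure (Fin n → X)) = μn := by
    rw [hμn]; exact MeasureTheory.volume_pi
  -- per-θ product random variable
  set Zr : Θ → (Fin n → X) → ℝ :=
    fun θ D => ∏ i : Fin n, Real.exp (m θ - ψ - (1 - p (D i) θ)) with hZr_def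
  have Zr_meas : ∀ θ, Measurable (Zr θ) := by
    intro θ
    apply Finset.measurable_prod
    intro i _
    exact Real.measurable_exp.comp
      (measurable_const.sub (measurable_const.sub ((pmeas θ).comp (measurable_pi_apply i))))
  have Zr_nonneg : ∀ θ D, 0 ≤ Zr θ D := by
    intro θ D
    exact Finset.prod_nonneg fun i _ => (Real.exp_pos _).le
  have Zr_int : ∀ θ, Integrable (Zr θ) μn := by
    intro θ
    rw [← hvol]
    exact MeasureTheory.Integrable.fintype_prod
      (f := fun _ : Fin n => fun x : X => Real.exp (m θ - ψ - (1 - p x θ)))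
      (fun _ => int_exp θ)
  have Zr_exp : ∀ θ, ∫ D, Zr θ D ∂μn ≤ 1 := by
    intro θ
    rw [← hvol, hZr_def]
    rw [MeasureTheory.integral_fintype_prod_volume_eq_pow (ι := Fin n)
      (fun x : X => Real.exp (m θ - ψ - (1 - p x θ)))]
    apply pow_le_one₀
    · exact integral_nonneg fun x => (Real.exp_pos _).le
    · exact mgf θ
  -- the PAC-Bayes supermartingale
  set Z : (Fin n → X) → ℝ≥0∞ :=
    fun D => ∑' θ : S, ENNReal.ofReal (w θ) * ENNReal.ofReal (Zr θ D) with hZ_def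
  have Z_meas : Measurable Z := by
    apply Measurable.ennreal_tsum
    intro θ
    exact (measurable_const.mul (ENNReal.measurable_ofReal.comp (Zr_meas θ)))
  have hw_summable : Summable fun θ : S => w θ := by
    by_contra hcon
    rw [tsum_eq_zero_of_not_summable hcon] at hw_sum
    norm_num at hw_sum
  have Z_lint : ∫⁻ D, Z D ∂μn ≤ 1 := by
    rw [hZ_def]
    have := lintegral_tsum (μ := μn)
      (f := fun (θ : S) D => ENNReal.ofReal (w θ) * ENNReal.ofReal (Zr θ D))
      (fun θ => (measurable_const.mul
        (ENNReal.measurable_ofReal.comp (Zr_meas θ))).aemeasurable)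
    rw [this]
    have hterm : ∀ θ : S, ∫⁻ D, ENNReal.ofReal (w θ) * ENNReal.ofReal (Zr θ D) ∂μn
        ≤ ENNReal.ofReal (w θ) := by
      intro θ
      have hZm : Measurable fun D => ENNReal.ofReal (Zr (θ : Θ) D) :=
        ENNReal.measurable_ofReal.comp (Zr_meas θ)
      rw [lintegral_const_mul _ hZm]
      have h1 : ∫⁻ D, ENNReal.ofReal (Zr θ D) ∂μn = ENNReal.ofReal (∫ D, Zr θ D ∂μn) :=
        (MeasureTheory.ofReal_integral_eq_lintegral_ofReal (Zr_int θ)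
          (Filter.Eventually.of_forall (Zr_nonneg θ))).symm
      rw [h1]
      calc ENNReal.ofReal (w θ) * ENNReal.ofReal (∫ D, Zr θ D ∂μn)
          ≤ ENNReal.ofReal (w θ) * 1 := by
            apply mul_le_mul_right
            rw [← ENNReal.ofReal_one]
            exact ENNReal.ofReal_le_ofReal (Zr_exp θ)
        _ = ENNReal.ofReal (w θ) := mul_one _
    calc ∑' θ : S, ∫⁻ D, ENNReal.ofReal (w θ) * ENNReal.ofReal (Zr θ D) ∂μn
        ≤ ∑' θ : S, ENNReal.ofReal (w θ) := ENNReal.tsum_le_tsum hterm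
      _ = ENNReal.ofReal (∑' θ : S, w θ) :=
          (ENNReal.ofReal_tsum_of_nonneg (fun θ : S => hw_nonneg θ.1 θ.2) hw_summable).symm
      _ = 1 := by rw [hw_sum, ENNReal.ofReal_one]
  -- Markov
  set aξ : ℝ≥0∞ := (ENNReal.ofReal ξ)⁻¹ with haξ_def
  have hmark : μn {D | aξ ≤ Z D} ≤ ENNReal.ofReal ξ := by
    have h := mul_meas_ge_le_lintegral₀ (μ := μn) Z_meas.aemeasurable aξ
    have h2 : aξ * μn {D | aξ ≤ Z D} ≤ 1 := le_trans h Z_lint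
    have h3 : μn {D | aξ ≤ Z D} ≤ aξ⁻¹ :=
      ENNReal.le_inv_iff_mul_le.2 (by rwa [mul_comm])
    rwa [haξ_def, inv_inv] at h3
  -- the good (full-measure) set
  set T : Set X := ⋂ θ : S, {x | Real.exp (-B) ≤ p x (θ : Θ) ∧ p x (θ : Θ) ≤ 1} with hT_def
  have hTmeas : MeasurableSet T := by
    apply MeasurableSet.iInter
    intro θ
    exact (measurableSet_le measurable_const (pmeas θ)).inter
      (measurableSet_le (pmeas θ) measurable_const)
  have hTc : ν Tᶜ = 0 := by
    rw [hT_def, Set.compl_iInter]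
    apply measure_iUnion_null
    intro θ
    have hb := hbound (θ : Θ)
    rw [ae_iff] at hb
    simpa [Set.compl_setOf] using hb
  have hT1 : ν T = 1 := by
    have := measure_add_measure_compl hTmeas (μ := ν)
    rw [hTc, add_zero] at this
    rw [this]; exact measure_univ
  set G : Set (Fin n → X) := Set.univ.pi (fun _ : Fin n => T) with hG_def
  have hGmeas : MeasurableSet G := MeasurableSet.univ_pi fun _ => hTmeas
  have hG1 : μn G = 1 := by
    rw [hG_def, hμn, Measure.pi_pi]
    simp [hT1]
  -- measure lower bound for the intersection event
  have hZset : MeasurableSet {D | aξ ≤ Z D} := measurableSet_le measurable_const Z_meas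
  have hmeas_lb : ENNReal.ofReal (1 - ξ) ≤ μn ({D | Z D < aξ} ∩ G) := by
    have hcompl : {D | Z D < aξ} = {D | aξ ≤ Z D}ᶜ := by
      ext D; simp [not_le]
    have h1 : μn {D | Z D < aξ} = 1 - μn {D | aξ ≤ Z D} := by
      rw [hcompl, prob_compl_eq_one_sub hZset]
    have h2 : μn ({D | Z D < aξ} ∩ G) = μn {D | Z D < aξ} := by
      apply measure_inter_conull'
      apply measure_mono_null (Set.diff_subset_compl _ _)
      rw [prob_compl_eq_one_sub hGmeas, hG1]
      simp
    rw [h2, h1]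
    calc ENNReal.ofReal (1 - ξ) = 1 - ENNReal.ofReal ξ := by
          rw [ENNReal.ofReal_sub _ hξ.le, ENNReal.ofReal_one]
      _ ≤ 1 - μn {D | aξ ≤ Z D} := tsub_le_tsub_left hmark 1
  refine le_trans hmeas_lb (measure_mono ?_)
  -- deterministic part
  rintro D ⟨hDZ, hDG⟩
  simp only [Set.mem_setOf_eq] at hDZ ⊢
  intro θs hθs
  have hDT : ∀ i : Fin n, D i ∈ T := fun i => hDG i (Set.mem_univ i)
  have hpb : ∀ (i : Fin n) (j : Fin E),
      Real.exp (-B) ≤ p (D i) (θs j) ∧ p (D i) (θs j) ≤ 1 := by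
    intro i j
    have h := hDT i
    rw [hT_def] at h
    exact Set.mem_iInter.1 h ⟨θs j, (hθs j).1⟩
  have hpE_bounds : ∀ x : X,
      (∀ j : Fin E, Real.exp (-B) ≤ p x (θs j) ∧ p x (θs j) ≤ 1) →
      Real.exp (-B) ≤ ensemblePredictive p E θs x ∧ ensemblePredictive p E θs x ≤ 1 := by
    intro x hx
    have hEne : (E:ℝ) ≠ 0 := ne_of_gt hER
    unfold ensemblePredictive
    constructor
    · have h1 : (E:ℝ) * Real.exp (-B) ≤ ∑ j, p x (θs j) := by
        calc (E:ℝ) * Real.exp (-B) = ∑ _j : Fin E, Real.exp (-B) := by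
              simp [Finset.sum_const, Finset.card_univ, mul_comm]
          _ ≤ ∑ j, p x (θs j) := Finset.sum_le_sum fun j _ => (hx j).1
      have h0 : Real.exp (-B) = (1/(E:ℝ)) * ((E:ℝ) * Real.exp (-B)) := by field_simp
      rw [h0]
      exact mul_le_mul_of_nonneg_left h1 (by positivity)
    · have h2 : ∑ j, p x (θs j) ≤ (E:ℝ) := by
        calc ∑ j, p x (θs j) ≤ ∑ _j : Fin E, (1:ℝ) := Finset.sum_le_sum fun j _ => (hx j).2
          _ = (E:ℝ) := by simp
      have h3 : (1/(E:ℝ)) * ∑ j, p x (θs j) ≤ (1/(E:ℝ)) * (E:ℝ) :=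
        mul_le_mul_of_nonneg_left h2 (by positivity)
      rw [one_div_mul_cancel hEne] at h3
      exact h3
  -- per-ensemble-member consequence of the event
  have hj : ∀ j : Fin E, Real.log (w (θs j)) +
      ((n:ℝ) * m (θs j) - (n:ℝ) * ψ - ∑ i, (1 - p (D i) (θs j))) ≤ - Real.log ξ := by
    intro j
    have hmem := (hθs j).1
    have hwj := (hθs j).2
    have hterm : ENNReal.ofReal (w (θs j)) * ENNReal.ofReal (Zr (θs j) D) ≤ Z D := by
      simp only [hZ_def]
      exact ENNReal.le_tsum (⟨θs j, hmem⟩ : S)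
    have hlt : ENNReal.ofReal (w (θs j) * Zr (θs j) D) < ENNReal.ofReal ξ⁻¹ := by
      rw [ENNReal.ofReal_mul (le_of_lt hwj), ENNReal.ofReal_inv_of_pos hξ]
      exact lt_of_le_of_lt hterm hDZ
    have hltr : w (θs j) * Zr (θs j) D < ξ⁻¹ :=
      (ENNReal.ofReal_lt_ofReal_iff (by positivity)).1 hlt
    have hZrpos : 0 < Zr (θs j) D := by
      simp only [hZr_def]; exact Finset.prod_pos fun i _ => Real.exp_pos _
    have hlogle : Real.log (w (θs j) * Zr (θs j) D) ≤ Real.log ξ⁻¹ :=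
      Real.log_le_log (by positivity) hltr.le
    rw [Real.log_mul (ne_of_gt hwj) (ne_of_gt hZrpos), Real.log_inv] at hlogle
    have hlogZr : Real.log (Zr (θs j) D) =
        (n:ℝ) * m (θs j) - (n:ℝ) * ψ - ∑ i, (1 - p (D i) (θs j)) := by
      simp only [hZr_def]
      rw [← Real.exp_sum, Real.log_exp]
      rw [Finset.sum_sub_distrib, Finset.sum_const, Finset.card_univ, Fintype.card_fin,
        nsmul_eq_mul]
      ring
    rw [hlogZr] at hlogle
    linarith
  -- sum the per-member inequalities
  have hsumj : ∑ j, Real.log (w (θs j)) +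
      ((n:ℝ) * ∑ j, m (θs j) - (n:ℝ) * (E:ℝ) * ψ - ∑ j, ∑ i, (1 - p (D i) (θs j)))
      ≤ (E:ℝ) * (- Real.log ξ) := by
    have h := Finset.sum_le_sum (fun j (_ : j ∈ (Finset.univ : Finset (Fin E))) => hj j)
    rw [Finset.sum_add_distrib, Finset.sum_sub_distrib, Finset.sum_sub_distrib,
      ← Finset.mul_sum, Finset.sum_const, Finset.card_univ, Fintype.card_fin,
      nsmul_eq_mul, Finset.sum_const, Finset.card_univ, Fintype.card_fin, nsmul_eq_mul] at h
    calc ∑ j, Real.log (w (θs j)) +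
        ((n:ℝ) * ∑ j, m (θs j) - (n:ℝ) * (E:ℝ) * ψ - ∑ j, ∑ i, (1 - p (D i) (θs j)))
        = ∑ j, Real.log (w (θs j)) + ((n:ℝ) * ∑ j, m (θs j) - (E:ℝ) * ((n:ℝ) * ψ)
            - ∑ j, ∑ i, (1 - p (D i) (θs j))) := by ring
      _ ≤ (E:ℝ) * (- Real.log ξ) := by linarith [h]
  -- population step
  have step_pop0 := aux_pop ν p B hB E hE θs (fun j => pmeas (θs j)) (fun j => int_p (θs j))
    (fun j => int_g (θs j)) (fun j => hbound (θs j)) hpE_bounds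
  have step_pop : ensembleCodeLength p ν E θs ≤ C * ((1/(E:ℝ)) * ∑ j, m (θs j)) := step_pop0
  -- empirical step
  have hemp := aux_emp p n E hn hE D θs
    (fun i j => lt_of_lt_of_le (Real.exp_pos _) (hpb i j).1) (fun i j => (hpb i j).2)
  -- combine
  have hkey : (n:ℝ) * ∑ j, m (θs j) ≤
      (n:ℝ) * ∑ j, empRisk p n D (θs j) - (n:ℝ) * (E:ℝ) * ensembleEmpVariance p n D E θs
      + (n:ℝ) * (E:ℝ) * ψ - ∑ j, Real.log (w (θs j)) - (E:ℝ) * Real.log ξ := by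
    linarith [hsumj, hemp]
  exact aux_combine hCpos hCψA hnR hER hkey step_pop

end
end
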